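/- arXiv:1410.4158 — 8 statements merged into one kernel-verified Lean document; each statement's English description precedes it below -/
import Mathlib

section
/- Let S ⊆ ℝⁿ be a nonempty compact set and f : S → ℝ be lower semi-continuous. Then the convex hull of the epigraph of f (viewing f as +∞ outside S) is a closed subset of ℝⁿ × ℝ. -/
open Filter Topology
set_option maxHeartbeats 1000000

private lemma sum_extend_aux {M : Type*} [AddCommMonoid M] {N : ℕ} {ι : Type*} [Fintype ι]
    (g : ι ↪ Fin N) (F : Fin N → M) (hF : ∀ j, (∀ i, g i ≠ j) → F j = 0) :
    ∑ j, F j = ∑ i, F (g i) := by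
  rw [← Finset.sum_map Finset.univ g F]
  symm
  apply Finset.sum_subset (Finset.subset_univ _)
  intro j _ hj
  exact hF j fun i hgi => hj (Finset.mem_map.mpr ⟨i, Finset.mem_univ _, hgi⟩)

private lemma term_event_aux {n : ℕ} {S : Set (Fin n → ℝ)} {f : (Fin n → ℝ) → ℝ}
    (hf : LowerSemicontinuousOn f S)
    {w : ℕ → ℝ} {y : ℕ → Fin n → ℝ} {w₀ : ℝ} {y₀ : Fin n → ℝ}
    (hy₀ : y₀ ∈ S) (hwn : ∀ j, 0 ≤ w j) (hyS : ∀ j, y j ∈ S)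
    (hw1 : w₀ ≤ 1)
    (hwt : Tendsto w atTop (𝓝 w₀))
    (hyt : Tendsto y atTop (𝓝 y₀))
    {ε : ℝ} (hε : 0 < ε) :
    ∀ᶠ j in atTop, w₀ * f y₀ - ε < w j * f (y j) := by
  obtain ⟨c, hc⟩ : ∃ c : ℝ, c = f y₀ - ε / 2 := ⟨_, rfl⟩
  have h1 : ∀ᶠ j in atTop, c < f (y j) := by
    have ht : Tendsto y atTop (𝓝[S] y₀) :=
      tendsto_nhdsWithin_iff.mpr ⟨hyt, Filter.Eventually.of_forall hyS⟩
    exact ht.eventually (hf y₀ hy₀ c (by linarith))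
  have h2 : Tendsto (fun j => w j * c) atTop (𝓝 (w₀ * c)) := hwt.mul_const c
  have h3 : ∀ᶠ j in atTop, w₀ * c - ε / 2 < w j * c :=
    h2.eventually (eventually_gt_nhds (by linarith))
  filter_upwards [h1, h3] with j hj1 hj3
  have h4 : w j * c ≤ w j * f (y j) := mul_le_mul_of_nonneg_left hj1.le (hwn j)
  have h5 : w₀ * (ε / 2) ≤ ε / 2 := mul_le_of_le_one_left (le_of_lt (half_pos hε)) hw1
  have h6 : w₀ * c = w₀ * f y₀ - w₀ * (ε / 2) := by rw [hc]; ring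
  linarith [h4, hj3, h5, h6]

/-- For `S ⊆ ℝⁿ` nonempty compact and `f` lower semicontinuous on `S`,
the convex hull of the epigraph `{(x,t) : x ∈ S, f x ≤ t}` is closed. -/
theorem closed_convexHull_epigraph (n : ℕ) (S : Set (Fin n → ℝ)) (f : (Fin n → ℝ) → ℝ)
    (hS : S.Nonempty) (hScomp : IsCompact S) (hf : LowerSemicontinuousOn f S) :
    IsClosed (convexHull ℝ {p : (Fin n → ℝ) × ℝ | p.1 ∈ S ∧ f p.1 ≤ p.2}) := by
  classical
  obtain ⟨x₀, hx₀⟩ := hS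
  set E : Set ((Fin n → ℝ) × ℝ) := {p : (Fin n → ℝ) × ℝ | p.1 ∈ S ∧ f p.1 ≤ p.2} with hE
  set T : Set ((Fin n → ℝ) × ℝ) :=
    {p | ∃ w : Fin (n + 2) → ℝ, ∃ y : Fin (n + 2) → (Fin n → ℝ),
      (∀ i, 0 ≤ w i) ∧ (∑ i, w i) = 1 ∧ (∀ i, y i ∈ S) ∧
      (∑ i, w i • y i) = p.1 ∧ (∑ i, w i * f (y i)) ≤ p.2} with hT
  have hx₀E : (x₀, f x₀) ∈ E := ⟨hx₀, le_refl _⟩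
  -- T ⊆ convexHull
  have hTsub : T ⊆ convexHull ℝ E := by
    rintro ⟨x, t⟩ ⟨w, y, hw0, hw1, hyS, hx, hineq⟩
    have hexc0 : (0:ℝ) ≤ t - ∑ i, w i * f (y i) := by
      simp only [Set.mem_setOf_eq] at hineq; linarith
    refine mem_convexHull_of_exists_fintype w
      (fun i => (y i, f (y i) + (t - ∑ i, w i * f (y i)))) hw0 hw1
      (fun i => ⟨hyS i, by simpa using hexc0⟩) ?_
    apply Prod.ext
    · rw [Prod.fst_sum]
      simpa using hx
    · rw [Prod.snd_sum]
      simp only [Prod.smul_mk, smul_eq_mul]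
      have : ∑ i, w i * (f (y i) + (t - ∑ i, w i * f (y i)))
          = ∑ i, w i * f (y i) + (∑ i, w i) * (t - ∑ i, w i * f (y i)) := by
        rw [Finset.sum_mul]
        rw [← Finset.sum_add_distrib]
        exact Finset.sum_congr rfl fun i _ => by ring
      rw [this, hw1]
      ring
  -- convexHull ⊆ T
  have hCsub : convexHull ℝ E ⊆ T := by
    intro p hp
    obtain ⟨ι, hι, z, w, hzE, haff, hwpos, hw1, hsum⟩ :=
      eq_pos_convex_span_of_mem_convexHull hp
    letI := hι
    have hcard : Fintype.card ι ≤ n + 2 := by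
      have h1 := haff.card_le_finrank_succ
      have h2 : Module.finrank ℝ (vectorSpan ℝ (Set.range z))
          ≤ Module.finrank ℝ ((Fin n → ℝ) × ℝ) := Submodule.finrank_le _
      have h3 : Module.finrank ℝ ((Fin n → ℝ) × ℝ) = n + 1 := by
        rw [Module.finrank_prod, Module.finrank_pi, Module.finrank_self, Fintype.card_fin]
      omega
    obtain ⟨g⟩ : Nonempty (ι ↪ Fin (n + 2)) :=
      Function.Embedding.nonempty_of_card_le (by simpa using hcard)
    obtain ⟨W, hW⟩ : ∃ W : Fin (n+2) → ℝ,
        W = fun j => if h : ∃ i, g i = j then w h.choose else 0 := ⟨_, rfl⟩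
    obtain ⟨Z, hZ⟩ : ∃ Z : Fin (n+2) → (Fin n → ℝ) × ℝ,
        Z = fun j => if h : ∃ i, g i = j then z h.choose else (x₀, f x₀) := ⟨_, rfl⟩
    have hWg : ∀ i, W (g i) = w i := by
      intro i
      have h : ∃ i', g i' = g i := ⟨i, rfl⟩
      rw [hW]; dsimp only; rw [dif_pos h]
      congr 1
      exact g.injective h.choose_spec
    have hZg : ∀ i, Z (g i) = z i := by
      intro i
      have h : ∃ i', g i' = g i := ⟨i, rfl⟩
      rw [hZ]; dsimp only; rw [dif_pos h]
      congr 1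
      exact g.injective h.choose_spec
    have hZE : ∀ j, Z j ∈ E := by
      intro j
      rw [hZ]; dsimp only
      split
      · exact hzE (Set.mem_range_self _)
      · exact hx₀E
    have hW0 : ∀ j, 0 ≤ W j := by
      intro j
      rw [hW]; dsimp only
      split
      · exact (hwpos _).le
      · exact le_refl 0
    have key : ∀ {M : Type} [AddCommMonoid M] [Module ℝ M] (G : ((Fin n → ℝ) × ℝ) → M),
        ∑ j, W j • G (Z j) = ∑ i, w i • G (z i) := by
      intro M _ _ G
      rw [sum_extend_aux g (fun j => W j • G (Z j))]
      · exact Finset.sum_congr rfl fun i _ => by rw [hWg, hZg]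
      · intro j hj
        have hne : ¬ ∃ i, g i = j := by
          rintro ⟨i, hi⟩; exact hj i hi
        have : W j = 0 := by rw [hW]; dsimp only; rw [dif_neg hne]
        rw [this, zero_smul]
    refine ⟨W, fun j => (Z j).1, hW0, ?_, fun j => (hZE j).1, ?_, ?_⟩
    · calc ∑ j, W j = ∑ j, W j • (1:ℝ) := by simp
        _ = ∑ i, w i • (1:ℝ) := key (G := fun _ => (1:ℝ))
        _ = 1 := by simp only [smul_eq_mul, mul_one]; exact hw1
    · calc ∑ j, W j • (Z j).1 = ∑ i, w i • (z i).1 := key _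
        _ = (∑ i, w i • z i).1 := by rw [Prod.fst_sum]; exact Finset.sum_congr rfl fun i _ => rfl
        _ = p.1 := congrArg Prod.fst hsum
    · have h1 : ∑ j, W j * f ((Z j).1) ≤ ∑ j, W j * (Z j).2 :=
        Finset.sum_le_sum fun j _ => mul_le_mul_of_nonneg_left (hZE j).2 (hW0 j)
      have h2 : ∑ j, W j * (Z j).2 = p.2 := by
        calc ∑ j, W j * (Z j).2 = ∑ j, W j • (Z j).2 := by simp [smul_eq_mul]
          _ = ∑ i, w i • (z i).2 := key (G := fun q => q.2)
          _ = (∑ i, w i • z i).2 := by rw [Prod.snd_sum]; exact Finset.sum_congr rfl fun i _ => rfl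
          _ = p.2 := congrArg Prod.snd hsum
      calc ∑ j, W j * f ((Z j).1) ≤ ∑ j, W j * (Z j).2 := h1
        _ = p.2 := h2
  have hEq : convexHull ℝ E = T := Set.Subset.antisymm hCsub hTsub
  rw [hEq]
  -- closedness of T
  apply IsSeqClosed.isClosed
  intro p q hp hq
  choose w y hw0 hw1 hyS hxeq hineq using hp
  have hD : IsCompact ((stdSimplex ℝ (Fin (n+2))) ×ˢ (Set.univ.pi fun _ : Fin (n+2) => S)) :=
    IsCompact.prod (isCompact_stdSimplex (𝕜 := ℝ) (ι := Fin (n+2))) (isCompact_univ_pi fun _ => hScomp)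
  obtain ⟨⟨w₀, y₀⟩, hmem, φ, hφ, hconv⟩ :=
    hD.tendsto_subseq (x := fun j => (w j, y j))
      (fun j => Set.mem_prod.mpr ⟨⟨hw0 j, hw1 j⟩, Set.mem_univ_pi.mpr fun i => hyS j i⟩)
  have hw₀0 : ∀ i, 0 ≤ w₀ i := (Set.mem_prod.mp hmem).1.1
  have hw₀1 : ∑ i, w₀ i = 1 := (Set.mem_prod.mp hmem).1.2
  have hy₀S : ∀ i, y₀ i ∈ S := fun i => Set.mem_univ_pi.mp (Set.mem_prod.mp hmem).2 i
  have hw₀le1 : ∀ i, w₀ i ≤ 1 := by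
    intro i
    calc w₀ i ≤ ∑ j, w₀ j := Finset.single_le_sum (fun j _ => hw₀0 j) (Finset.mem_univ i)
      _ = 1 := hw₀1
  have hwt : Tendsto (fun j => w (φ j)) atTop (𝓝 w₀) :=
    (continuous_fst.tendsto _).comp hconv
  have hyt : Tendsto (fun j => y (φ j)) atTop (𝓝 y₀) :=
    (continuous_snd.tendsto _).comp hconv
  have hwti : ∀ i, Tendsto (fun j => w (φ j) i) atTop (𝓝 (w₀ i)) :=
    fun i => tendsto_pi_nhds.mp hwt i
  have hyti : ∀ i, Tendsto (fun j => y (φ j) i) atTop (𝓝 (y₀ i)) :=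
    fun i => tendsto_pi_nhds.mp hyt i
  have hqt : Tendsto (fun j => p (φ j)) atTop (𝓝 q) := hq.comp hφ.tendsto_atTop
  -- first coordinate
  have hxeq' : ∑ i, w₀ i • y₀ i = q.1 := by
    have hFcont : Continuous (fun d : (Fin (n+2) → ℝ) × (Fin (n+2) → Fin n → ℝ) =>
        ∑ i, d.1 i • d.2 i) :=
      continuous_finset_sum _ fun i _ =>
        ((continuous_apply i).comp continuous_fst).smul ((continuous_apply i).comp continuous_snd)
    have h1 : Tendsto (fun j => ∑ i, w (φ j) i • y (φ j) i) atTop (𝓝 (∑ i, w₀ i • y₀ i)) :=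
      (hFcont.tendsto _).comp hconv
    have h2 : Tendsto (fun j => ∑ i, w (φ j) i • y (φ j) i) atTop (𝓝 q.1) := by
      have : (fun j => ∑ i, w (φ j) i • y (φ j) i) = fun j => (p (φ j)).1 := by
        funext j; exact hxeq (φ j)
      rw [this]
      exact (continuous_fst.tendsto _).comp hqt
    exact tendsto_nhds_unique h1 h2
  -- second coordinate inequality
  have hfin : ∑ i, w₀ i * f (y₀ i) ≤ q.2 := by
    by_contra hcon
    push_neg at hcon
    set ε : ℝ := ∑ i, w₀ i * f (y₀ i) - q.2 with hεdef
    have hε : 0 < ε := by linarith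
    have hεN : 0 < ε / (2 * (n + 2)) := by positivity
    have hev : ∀ᶠ j in atTop, ∀ i : Fin (n+2),
        w₀ i * f (y₀ i) - ε / (2 * (n+2)) < w (φ j) i * f (y (φ j) i) :=
      eventually_all.mpr fun i => term_event_aux hf (hy₀S i) (fun j => hw0 (φ j) i)
        (fun j => hyS (φ j) i) (hw₀le1 i) (hwti i) (hyti i) hεN
    have hev2 : ∀ᶠ j in atTop, (p (φ j)).2 < q.2 + ε / 2 :=
      ((continuous_snd.tendsto _).comp hqt).eventually (eventually_lt_nhds (by linarith))
    obtain ⟨j, hj1, hj2⟩ := (hev.and hev2).exists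
    have hsum1 : ∑ i : Fin (n+2), (w₀ i * f (y₀ i) - ε / (2 * (n+2)))
        < ∑ i, w (φ j) i * f (y (φ j) i) :=
      Finset.sum_lt_sum_of_nonempty Finset.univ_nonempty fun i _ => hj1 i
    have hsum2 : ∑ i : Fin (n+2), (w₀ i * f (y₀ i) - ε / (2 * (n+2)))
        = ∑ i, w₀ i * f (y₀ i) - ε / 2 := by
      rw [Finset.sum_sub_distrib, Finset.sum_const, Finset.card_univ, Fintype.card_fin,
        nsmul_eq_mul]
      have hne : (n + 2 : ℝ) ≠ 0 := by positivity
      field_simp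
      push_cast
      ring
    have h3 : ∑ i, w (φ j) i * f (y (φ j) i) ≤ (p (φ j)).2 := hineq (φ j)
    rw [hsum2] at hsum1
    have : ε < ε / 2 + ε / 2 := by linarith
    linarith
  exact ⟨w₀, y₀, hw₀0, hw₀1, hy₀S, hxeq', hfin⟩
end

section
/- Let S ⊆ ℝⁿ be a nonempty compact set, f : S → ℝ lower semi-continuous, and f̂ : conv(S) → ℝ the convex envelope of f (the largest closed convex function majorized by f). For any c ∈ ℝⁿ, if x is an extreme point of the set argmin_{y ∈ conv(S)} (f̂(y) + cᵀy), then x ∈ S and f(x) = f̂(x). -/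
open Set Filter Topology

section pad
variable {ι : Type*} [Fintype ι] {N : ℕ}

lemma key_sum {M : Type*} [AddCommMonoid M] (hcard : Fintype.card ι ≤ N) (F : ι → M) :
    ∑ j : Fin N, (if h : (j : ℕ) < Fintype.card ι
        then F ((Fintype.equivFin ι).symm ⟨j, h⟩) else 0) = ∑ i, F i := by
  classical
  set m := Fintype.card ι
  set e := (Fintype.equivFin ι).symm
  set u : Fin N → M := fun j => if h : (j : ℕ) < m then F (e ⟨j, h⟩) else 0 with hu
  have himg : ∑ j ∈ Finset.univ.image (Fin.castLE hcard), u j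
      = ∑ j : Fin m, u (Fin.castLE hcard j) :=
    Finset.sum_image (by intro a _ b _ hab; exact Fin.castLE_injective hcard hab)
  have h2 : ∑ j : Fin N, u j = ∑ j ∈ Finset.univ.image (Fin.castLE hcard), u j := by
    refine (Finset.sum_subset (Finset.subset_univ _) ?_).symm
    intro j _ hj
    have : ¬ ((j : ℕ) < m) := by
      intro h
      exact hj (Finset.mem_image.2 ⟨⟨j, h⟩, Finset.mem_univ _, by ext; simp⟩)
    simp [hu, this]
  have h3 : ∀ j : Fin m, u (Fin.castLE hcard j) = F (e j) := by
    intro j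
    have hlt : ((Fin.castLE hcard j : Fin N) : ℕ) < m := j.isLt
    simp only [hu, dif_pos hlt]
    congr 1
  rw [h2, himg]
  simp_rw [h3]
  exact Equiv.sum_comp e F

variable {V : Type*} [AddCommMonoid V] [Module ℝ V]

lemma pad_combo (hcard : Fintype.card ι ≤ N)
    (w : ι → ℝ) (z : ι → V) (hw : ∀ i, 0 ≤ w i) (z0 : V) :
    ∃ (w' : Fin N → ℝ) (z' : Fin N → V),
      (∀ j, 0 ≤ w' j) ∧ (∑ j, w' j = ∑ i, w i) ∧
      (∀ j, z' j = z0 ∨ ∃ i, z' j = z i) ∧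
      (∑ j, w' j • z' j = ∑ i, w i • z i) := by
  classical
  refine ⟨fun j => if h : (j : ℕ) < Fintype.card ι then w ((Fintype.equivFin ι).symm ⟨j, h⟩) else 0,
          fun j => if h : (j : ℕ) < Fintype.card ι then z ((Fintype.equivFin ι).symm ⟨j, h⟩) else z0,
          ?_, ?_, ?_, ?_⟩
  · intro j; dsimp only; split
    · exact hw _
    · exact le_rfl
  · exact key_sum hcard w
  · intro j; dsimp only; split
    · exact Or.inr ⟨_, rfl⟩
    · exact Or.inl rfl
  · have := key_sum hcard (fun i => w i • z i)
    rw [← this]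
    apply Finset.sum_congr rfl
    intro j _
    dsimp only
    split
    · rfl
    · simp
end pad

section cara
variable {V : Type*} [NormedAddCommGroup V] [NormedSpace ℝ V] [FiniteDimensional ℝ V] {N : ℕ}

lemma cara_pad (hN : Module.finrank ℝ V + 1 ≤ N) (s : Set V) {z0 : V} (hz0 : z0 ∈ s)
    {q : V} (hq : q ∈ convexHull ℝ s) :
    ∃ (w : Fin N → ℝ) (r : Fin N → V),
      (∀ j, 0 ≤ w j) ∧ (∑ j, w j = 1) ∧ (∀ j, r j ∈ s) ∧ (∑ j, w j • r j = q) := by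
  classical
  obtain ⟨ι, hι, z, w, hzs, hai, hwpos, hwsum, hzsum⟩ :=
    eq_pos_convex_span_of_mem_convexHull hq
  have hcard : Fintype.card ι ≤ N := by
    have h1 := hai.card_le_finrank_succ
    have h2 : Module.finrank ℝ (vectorSpan ℝ (Set.range z)) ≤ Module.finrank ℝ V :=
      Submodule.finrank_le _
    omega
  obtain ⟨w', z', hw', hsum', hmem', hsmul'⟩ :=
    pad_combo hcard w z (fun i => (hwpos i).le) z0
  refine ⟨w', z', hw', by rw [hsum', hwsum], ?_, by rw [hsmul', hzsum]⟩
  intro j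
  rcases hmem' j with h | ⟨i, h⟩
  · rw [h]; exact hz0
  · rw [h]; exact hzs ⟨i, rfl⟩

lemma isCompact_convexHull' {s : Set V} (hs : IsCompact s) : IsCompact (convexHull ℝ s) := by
  classical
  rcases s.eq_empty_or_nonempty with rfl | ⟨z0, hz0⟩
  · simp
  set N : ℕ := Module.finrank ℝ V + 1 with hN
  have himg : convexHull ℝ s =
      (fun wp : (Fin N → ℝ) × (Fin N → V) => ∑ j, wp.1 j • wp.2 j) ''
        ((stdSimplex ℝ (Fin N)) ×ˢ (univ.pi fun _ => s)) := by
    apply Subset.antisymm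
    · intro q hq
      obtain ⟨w, r, hw0, hw1, hrs, hsum⟩ := cara_pad (le_refl N) s hz0 hq
      exact ⟨(w, r), ⟨⟨hw0, hw1⟩, fun j _ => hrs j⟩, hsum⟩
    · rintro _ ⟨⟨w, r⟩, ⟨⟨hw0, hw1⟩, hrs⟩, rfl⟩
      exact (convex_convexHull ℝ s).sum_mem (fun j _ => hw0 j) hw1
        (fun j _ => subset_convexHull ℝ s (hrs j (mem_univ j)))
  rw [himg]
  apply IsCompact.image
  · exact (isCompact_stdSimplex (𝕜 := ℝ) (ι := Fin N)).prod (isCompact_univ_pi fun _ => hs)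
  · exact continuous_finset_sum _ fun j _ =>
      ((continuous_apply j).comp continuous_fst).smul ((continuous_apply j).comp continuous_snd)
end cara

lemma lsc_bdd {n : ℕ} {S : Set (Fin n → ℝ)} (hScomp : IsCompact S)
    {f : (Fin n → ℝ) → ℝ} (hf : LowerSemicontinuousOn f S) :
    ∃ m0 : ℝ, ∀ y ∈ S, m0 ≤ f y := by
  by_contra h
  push_neg at h
  choose u hu hfu using fun k : ℕ => h (-(k : ℝ))
  obtain ⟨y, hyS, φ, hφ, hconv⟩ := hScomp.tendsto_subseq hu
  have hconv' : Tendsto (u ∘ φ) atTop (𝓝[S] y) :=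
    tendsto_nhdsWithin_iff.2 ⟨hconv, Eventually.of_forall fun k => hu _⟩
  have hev := hconv'.eventually (hf y hyS (f y - 1) (by linarith))
  obtain ⟨K, hK⟩ := eventually_atTop.1 hev
  obtain ⟨K2, hK2⟩ := exists_nat_ge (1 - f y)
  have h1 : f y - 1 < f (u (φ (max K K2))) := hK _ (le_max_left _ _)
  have h2 : f (u (φ (max K K2))) < -((φ (max K K2) : ℕ) : ℝ) := hfu _
  have h3 : ((max K K2 : ℕ) : ℝ) ≤ ((φ (max K K2) : ℕ) : ℝ) := by
    exact_mod_cast hφ.le_apply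
  have h4 : (K2 : ℝ) ≤ ((max K K2 : ℕ) : ℝ) := by exact_mod_cast le_max_right K K2
  linarith

lemma envelope_combo {n : ℕ} (S : Set (Fin n → ℝ)) (f : (Fin n → ℝ) → ℝ)
    (hS : S.Nonempty) (hScomp : IsCompact S) (hf : LowerSemicontinuousOn f S) :
    ∃ h : (Fin n → ℝ) → ℝ,
      ConvexOn ℝ (convexHull ℝ S) h ∧
      LowerSemicontinuousOn h (convexHull ℝ S) ∧
      (∀ y ∈ S, h y ≤ f y) ∧
      (∀ x ∈ convexHull ℝ S, ∃ (w : Fin (n+2) → ℝ) (p : Fin (n+2) → (Fin n → ℝ)),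
        (∀ j, 0 ≤ w j) ∧ (∑ j, w j = 1) ∧ (∀ j, p j ∈ S) ∧ (∑ j, w j • p j = x) ∧
        ∑ j, w j * f (p j) ≤ h x) := by
  classical
  obtain ⟨m0, hm0⟩ := lsc_bdd hScomp hf
  obtain ⟨s0, hs0⟩ := hS
  set epi : Set ((Fin n → ℝ) × ℝ) := {q | q.1 ∈ S ∧ f q.1 ≤ q.2} with hepidef
  have hz0 : ((s0, f s0) : (Fin n → ℝ) × ℝ) ∈ epi := ⟨hs0, le_rfl⟩
  set C : Set ((Fin n → ℝ) × ℝ) := closure (convexHull ℝ epi) with hCdef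
  have hCclosed : IsClosed C := isClosed_closure
  have hCconv : Convex ℝ C := (convex_convexHull ℝ epi).closure
  have hKS : IsCompact (convexHull ℝ S) := isCompact_convexHull' hScomp
  have hbox : C ⊆ (convexHull ℝ S) ×ˢ Ici m0 := by
    apply closure_minimal
    · apply convexHull_min
      · rintro ⟨y, t⟩ ⟨h1, h2⟩
        exact ⟨subset_convexHull ℝ S h1, le_trans (hm0 y h1) h2⟩
      · exact (convex_convexHull ℝ S).prod (convex_Ici m0)
    · exact hKS.isClosed.prod isClosed_Ici
  have hfib_bdd : ∀ x : Fin n → ℝ, BddBelow {t | (x, t) ∈ C} :=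
    fun x => ⟨m0, fun t ht => (hbox ht).2⟩
  have hfib_closed : ∀ x : Fin n → ℝ, IsClosed {t | (x, t) ∈ C} := by
    intro x
    exact hCclosed.preimage (Continuous.prodMk_right x)
  have hfib_ne : ∀ x ∈ convexHull ℝ S, {t | (x, t) ∈ C}.Nonempty := by
    intro x hx
    have himg : (LinearMap.fst ℝ (Fin n → ℝ) ℝ) '' convexHull ℝ epi = convexHull ℝ S := by
      rw [LinearMap.image_convexHull]
      congr 1
      apply Subset.antisymm
      · rintro _ ⟨⟨y, t⟩, ⟨h1, _⟩, rfl⟩; exact h1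
      · intro y hy; exact ⟨(y, f y), ⟨hy, le_rfl⟩, rfl⟩
    rw [← himg] at hx
    obtain ⟨⟨y, t⟩, hmem, hxy⟩ := hx
    exact ⟨t, by simpa [← hxy] using subset_closure hmem⟩
  set h : (Fin n → ℝ) → ℝ := fun x => sInf {t | (x, t) ∈ C} with hhdef
  have hmemC : ∀ x ∈ convexHull ℝ S, (x, h x) ∈ C := fun x hx =>
    (hfib_closed x).csInf_mem (hfib_ne x hx) (hfib_bdd x)
  have hle : ∀ {x : Fin n → ℝ} {t : ℝ}, (x, t) ∈ C → h x ≤ t := fun ht =>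
    csInf_le (hfib_bdd _) ht
  refine ⟨h, ⟨convex_convexHull ℝ S, ?_⟩, ?_, ?_, ?_⟩
  · -- convexity inequality
    intro y hy z hz a b ha hb hab
    have hmem : (a • y + b • z, a * h y + b * h z) ∈ C := by
      have := hCconv (hmemC y hy) (hmemC z hz) ha hb hab
      simpa [Prod.smul_mk, Prod.mk_add_mk] using this
    simpa [smul_eq_mul] using hle hmem
  · -- lower semicontinuity
    intro x hx t ht
    set Kt : Set (Fin n → ℝ) := Prod.fst '' (C ∩ (univ ×ˢ Iic t)) with hKtdef
    have hKtcomp : IsCompact Kt := by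
      apply IsCompact.image _ continuous_fst
      apply IsCompact.of_isClosed_subset (hKS.prod (isCompact_Icc (a := m0) (b := t)))
        (hCclosed.inter (isClosed_univ.prod isClosed_Iic))
      rintro ⟨y, s⟩ ⟨hyC, -, hs⟩
      exact ⟨(hbox hyC).1, (hbox hyC).2, hs⟩
    have hxnot : x ∉ Kt := by
      rintro ⟨⟨y, s⟩, ⟨hyC, -, hs⟩, rfl⟩
      exact absurd (le_trans (hle hyC) hs) (not_le.2 ht)
    have hnhds : Ktᶜ ∈ 𝓝 x := hKtcomp.isClosed.isOpen_compl.mem_nhds hxnot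
    filter_upwards [mem_nhdsWithin_of_mem_nhds hnhds, self_mem_nhdsWithin] with z hzK hzS
    by_contra hcon
    push_neg at hcon
    exact hzK ⟨(z, h z), ⟨hmemC z hzS, mem_univ _, hcon⟩, rfl⟩
  · -- h ≤ f on S
    intro y hy
    exact hle (subset_closure (subset_convexHull ℝ epi ⟨hy, le_rfl⟩))
  · -- the combination
    intro x hx
    have hxC : (x, h x) ∈ C := hmemC x hx
    rw [hCdef] at hxC
    obtain ⟨q0, hq0mem, hq0lim⟩ := mem_closure_iff_seq_limit.1 hxC
    have hq02 : Tendsto (fun k => (q0 k).2) atTop (𝓝 (h x)) :=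
      (continuous_snd.tendsto _).comp hq0lim
    obtain ⟨K, hK⟩ := eventually_atTop.1 (hq02.eventually (eventually_lt_nhds (by linarith : h x < h x + 1)))
    set q : ℕ → (Fin n → ℝ) × ℝ := fun k => q0 (k + K) with hqdef
    have hqmem : ∀ k, q k ∈ convexHull ℝ epi := fun k => hq0mem (k + K)
    have hqlim : Tendsto q atTop (𝓝 (x, h x)) := hq0lim.comp (tendsto_add_atTop_nat K)
    have hq2lt : ∀ k, (q k).2 < h x + 1 := fun k => hK (k + K) (Nat.le_add_left K k)
    have hN : Module.finrank ℝ ((Fin n → ℝ) × ℝ) + 1 ≤ n + 2 := by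
      simp [Module.finrank_prod]
    choose w r hw0 hw1 hrs hsum using fun k => cara_pad hN epi hz0 (hqmem k)
    set p : ℕ → Fin (n+2) → (Fin n → ℝ) := fun k j => (r k j).1 with hpdef
    set t : ℕ → Fin (n+2) → ℝ := fun k j => w k j * (f (p k j) - m0) with htdef
    set B : ℝ := h x + 1 - m0 with hBdef
    have hpS : ∀ k j, p k j ∈ S := fun k j => (hrs k j).1
    have htnn : ∀ k j, 0 ≤ t k j := fun k j =>
      mul_nonneg (hw0 k j) (sub_nonneg.2 (hm0 _ (hpS k j)))
    have hsum1 : ∀ k, ∑ j, w k j • p k j = (q k).1 := by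
      intro k
      have := congrArg Prod.fst (hsum k)
      simpa [Prod.fst_sum] using this
    have hsum2 : ∀ k, ∑ j, w k j * (r k j).2 = (q k).2 := by
      intro k
      have := congrArg Prod.snd (hsum k)
      simpa [Prod.snd_sum] using this
    have hwfle : ∀ k, ∑ j, w k j * f (p k j) ≤ (q k).2 := by
      intro k
      rw [← hsum2 k]
      exact Finset.sum_le_sum fun j _ =>
        mul_le_mul_of_nonneg_left (hrs k j).2 (hw0 k j)
    have hsumt : ∀ k, ∑ j, t k j = (∑ j, w k j * f (p k j)) - m0 := by
      intro k
      simp only [htdef, mul_sub]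
      rw [Finset.sum_sub_distrib, ← Finset.sum_mul, hw1 k, one_mul]
    have htB : ∀ k j, t k j ≤ B := by
      intro k j
      calc t k j ≤ ∑ j', t k j' := Finset.single_le_sum (fun j' _ => htnn k j') (Finset.mem_univ j)
      _ = (∑ j', w k j' * f (p k j')) - m0 := hsumt k
      _ ≤ (q k).2 - m0 := by linarith [hwfle k]
      _ ≤ B := by linarith [hq2lt k]
    have hw01 : ∀ k j, w k j ∈ Icc (0:ℝ) 1 := by
      intro k j
      refine ⟨hw0 k j, ?_⟩
      calc w k j ≤ ∑ j', w k j' := Finset.single_le_sum (fun j' _ => hw0 k j') (Finset.mem_univ j)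
      _ = 1 := hw1 k
    set Kc : Set ((Fin (n+2) → ℝ) × ((Fin (n+2) → (Fin n → ℝ)) × (Fin (n+2) → ℝ))) :=
      (univ.pi fun _ => Icc (0:ℝ) 1) ×ˢ ((univ.pi fun _ => S) ×ˢ (univ.pi fun _ => Icc 0 B))
      with hKcdef
    have hKccomp : IsCompact Kc :=
      (isCompact_univ_pi fun _ => isCompact_Icc).prod
        ((isCompact_univ_pi fun _ => hScomp).prod (isCompact_univ_pi fun _ => isCompact_Icc))
    have hv : ∀ k, ((w k, (p k, t k)) : (Fin (n+2) → ℝ) × ((Fin (n+2) → (Fin n → ℝ)) × (Fin (n+2) → ℝ))) ∈ Kc := by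
      intro k
      exact ⟨fun j _ => hw01 k j, fun j _ => hpS k j, fun j _ => ⟨htnn k j, htB k j⟩⟩
    obtain ⟨⟨W, P, T⟩, hmemKc, φ, hφ, hvlim⟩ := hKccomp.tendsto_subseq hv
    have hWlim : Tendsto (fun k => w (φ k)) atTop (𝓝 W) :=
      (continuous_fst.tendsto _).comp hvlim
    have hPlim : Tendsto (fun k => p (φ k)) atTop (𝓝 P) :=
      (continuous_fst.tendsto _).comp ((continuous_snd.tendsto _).comp hvlim)
    have hTlim : Tendsto (fun k => t (φ k)) atTop (𝓝 T) :=
      (continuous_snd.tendsto _).comp ((continuous_snd.tendsto _).comp hvlim)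
    have hWj : ∀ j, Tendsto (fun k => w (φ k) j) atTop (𝓝 (W j)) :=
      fun j => ((continuous_apply j).tendsto _).comp hWlim
    have hPj : ∀ j, Tendsto (fun k => p (φ k) j) atTop (𝓝 (P j)) :=
      fun j => ((continuous_apply j).tendsto _).comp hPlim
    have hTj : ∀ j, Tendsto (fun k => t (φ k) j) atTop (𝓝 (T j)) :=
      fun j => ((continuous_apply j).tendsto _).comp hTlim
    have hW0 : ∀ j, 0 ≤ W j := fun j => (hmemKc.1 j (mem_univ j)).1
    have hPS' : ∀ j, P j ∈ S := fun j => hmemKc.2.1 j (mem_univ j)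
    have hT0 : ∀ j, 0 ≤ T j := fun j => (hmemKc.2.2 j (mem_univ j)).1
    have hqφ : Tendsto (fun k => q (φ k)) atTop (𝓝 (x, h x)) :=
      hqlim.comp hφ.tendsto_atTop
    have hW1 : ∑ j, W j = 1 := by
      have h1 : Tendsto (fun k => ∑ j, w (φ k) j) atTop (𝓝 (∑ j, W j)) :=
        tendsto_finset_sum _ fun j _ => hWj j
      have h2 : Tendsto (fun k => ∑ j, w (φ k) j) atTop (𝓝 1) := by
        simpa [hw1] using tendsto_const_nhds (x := (1:ℝ)) (f := atTop (α := ℕ))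
      exact tendsto_nhds_unique h1 h2
    have hsumP : ∑ j, W j • P j = x := by
      have h1 : Tendsto (fun k => ∑ j, w (φ k) j • p (φ k) j) atTop (𝓝 (∑ j, W j • P j)) :=
        tendsto_finset_sum _ fun j _ => (hWj j).smul (hPj j)
      have h2 : Tendsto (fun k => ∑ j, w (φ k) j • p (φ k) j) atTop (𝓝 x) := by
        have := (continuous_fst.tendsto _).comp hqφ
        simp only [Function.comp_def] at this
        simpa [hsum1] using this
      exact tendsto_nhds_unique h1 h2
    have hsumT : ∑ j, T j ≤ h x - m0 := by
      refine le_of_tendsto_of_tendsto' (tendsto_finset_sum _ fun j _ => hTj j)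
        (((continuous_snd.tendsto _).comp hqφ).sub_const m0) ?_
      intro k
      rw [hsumt (φ k)]
      have := hwfle (φ k)
      simp only [Function.comp]
      linarith
    have hkey : ∀ j, W j * (f (P j) - m0) ≤ T j := by
      intro j
      rcases eq_or_lt_of_le (hW0 j) with hWz | hWpos
      · rw [← hWz, zero_mul]; exact hT0 j
      · have hevpos : ∀ᶠ k in atTop, 0 < w (φ k) j :=
          (hWj j).eventually (eventually_gt_nhds hWpos)
        have hdivlim : Tendsto (fun k => t (φ k) j / w (φ k) j + m0) atTop
            (𝓝 (T j / W j + m0)) :=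
          ((hTj j).div (hWj j) (ne_of_gt hWpos)).add_const m0
        have heq : ∀ᶠ k in atTop, f (p (φ k) j) = t (φ k) j / w (φ k) j + m0 := by
          filter_upwards [hevpos] with k hk
          field_simp [htdef]
          simp only [htdef]; ring
        have hflim : Tendsto (fun k => f (p (φ k) j)) atTop (𝓝 (T j / W j + m0)) :=
          hdivlim.congr' (heq.mono fun k hk => hk.symm)
        have hfP : f (P j) ≤ T j / W j + m0 := by
          by_contra hc
          push_neg at hc
          have hc2 : (T j / W j + m0 + f (P j)) / 2 < f (P j) := by linarith
          have hPin : Tendsto (fun k => p (φ k) j) atTop (𝓝[S] (P j)) :=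
            tendsto_nhdsWithin_iff.2 ⟨hPj j, Eventually.of_forall fun k => hpS _ _⟩
          have hev := hPin.eventually (hf (P j) (hPS' j) _ hc2)
          have hge : (T j / W j + m0 + f (P j)) / 2 ≤ T j / W j + m0 :=
            ge_of_tendsto hflim (hev.mono fun k hk => le_of_lt hk)
          linarith
        have : W j * (f (P j) - m0) ≤ W j * (T j / W j) := by
          have := mul_le_mul_of_nonneg_left (by linarith : f (P j) - m0 ≤ T j / W j) (hW0 j)
          linarith
        calc W j * (f (P j) - m0) ≤ W j * (T j / W j) := this
        _ = T j := by field_simp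
    refine ⟨W, P, hW0, hW1, hPS', hsumP, ?_⟩
    have hsplit : ∑ j, W j * f (P j) = (∑ j, W j * (f (P j) - m0)) + m0 := by
      simp only [mul_sub]
      rw [Finset.sum_sub_distrib, ← Finset.sum_mul, hW1, one_mul]
      ring
    rw [hsplit]
    have : ∑ j, W j * (f (P j) - m0) ≤ ∑ j, T j :=
      Finset.sum_le_sum fun j _ => hkey j
    linarith

lemma extreme_eq_of_combo {V : Type*} [AddCommGroup V] [Module ℝ V] {T : Set V}
    (hT : Convex ℝ T) {x : V} (hx : x ∈ T.extremePoints ℝ) {N : ℕ}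
    {w : Fin N → ℝ} {p : Fin N → V} (hw0 : ∀ j, 0 ≤ w j) (hw1 : ∑ j, w j = 1)
    (hp : ∀ j, p j ∈ T) (hsum : ∑ j, w j • p j = x) :
    ∀ j, 0 < w j → p j = x := by
  classical
  intro j hj
  have hwj1 : w j ≤ 1 := by
    rw [← hw1]
    exact Finset.single_le_sum (fun i _ => hw0 i) (Finset.mem_univ j)
  have herase : w j + ∑ i ∈ Finset.univ.erase j, w i = 1 := by
    rw [Finset.add_sum_erase _ _ (Finset.mem_univ j), hw1]
  have herase' : w j • p j + ∑ i ∈ Finset.univ.erase j, w i • p i = x := by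
    rw [Finset.add_sum_erase _ (fun i => w i • p i) (Finset.mem_univ j), hsum]
  rcases eq_or_lt_of_le hwj1 with h1 | h1
  · -- w j = 1
    have hz : ∀ i ∈ Finset.univ.erase j, w i = 0 := by
      have hsum0 : ∑ i ∈ Finset.univ.erase j, w i = 0 := by linarith
      exact fun i hi =>
        (Finset.sum_eq_zero_iff_of_nonneg (fun i _ => hw0 i)).1 hsum0 i hi
    have : ∑ i ∈ Finset.univ.erase j, w i • p i = 0 :=
      Finset.sum_eq_zero fun i hi => by rw [hz i hi, zero_smul]
    rw [this, add_zero, h1, one_smul] at herase'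
    exact herase'
  · -- w j < 1
    have hb : (0:ℝ) < 1 - w j := by linarith
    set q : V := (1 - w j)⁻¹ • ∑ i ∈ Finset.univ.erase j, w i • p i with hqdef
    have hqT : q ∈ T := by
      have hq' : q = ∑ i ∈ Finset.univ.erase j, ((1 - w j)⁻¹ * w i) • p i := by
        rw [hqdef, Finset.smul_sum]
        exact Finset.sum_congr rfl fun i _ => smul_smul _ _ _
      rw [hq']
      refine hT.sum_mem (fun i _ => mul_nonneg (inv_nonneg.2 hb.le) (hw0 i)) ?_
        (fun i _ => hp i)
      rw [← Finset.mul_sum]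
      have : ∑ i ∈ Finset.univ.erase j, w i = 1 - w j := by linarith
      rw [this, inv_mul_cancel₀ hb.ne']
    have hseg : x ∈ openSegment ℝ (p j) q := by
      refine ⟨w j, 1 - w j, hj, hb, by ring, ?_⟩
      rw [hqdef, smul_inv_smul₀ hb.ne']
      exact herase'
    exact hx.2 (hp j) hqT hseg

/-- `g` is the convex envelope of `f` on `S`: the largest closed (lower semicontinuous)
convex function on `conv S` majorized by `f` on `S`. -/
def IsConvexEnvelopeOn {E : Type*} [NormedAddCommGroup E] [NormedSpace ℝ E]
    (S : Set E) (f g : E → ℝ) : Prop :=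
  ConvexOn ℝ (convexHull ℝ S) g ∧
  LowerSemicontinuousOn g (convexHull ℝ S) ∧
  (∀ x ∈ S, g x ≤ f x) ∧
  ∀ h : E → ℝ, ConvexOn ℝ (convexHull ℝ S) h → LowerSemicontinuousOn h (convexHull ℝ S) →
    (∀ x ∈ S, h x ≤ f x) → ∀ x ∈ convexHull ℝ S, h x ≤ g x

/-- at any extreme point `x` of `argmin_{y ∈ conv S} (f̂(y) + cᵀy)`,
one has `x ∈ S` and `f x = f̂ x`. -/
theorem extreme_point_of_argmin_envelope (n : ℕ) (S : Set (Fin n → ℝ))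
    (f g : (Fin n → ℝ) → ℝ) (hS : S.Nonempty) (hScomp : IsCompact S)
    (hf : LowerSemicontinuousOn f S) (hg : IsConvexEnvelopeOn S f g)
    (c : Fin n → ℝ) (x : Fin n → ℝ)
    (hx : x ∈ Set.extremePoints ℝ
      {y ∈ convexHull ℝ S | ∀ z ∈ convexHull ℝ S,
        g y + ∑ i, c i * y i ≤ g z + ∑ i, c i * z i}) :
    x ∈ S ∧ f x = g x := by
  classical
  obtain ⟨⟨hxconv, hxmin⟩, hxext⟩ := hx
  obtain ⟨h, hconv, hlsc, hhf, hcombo⟩ := envelope_combo S f hS hScomp hf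
  have hhg : ∀ y ∈ convexHull ℝ S, h y ≤ g y := hg.2.2.2 h hconv hlsc hhf
  obtain ⟨w, p, hw0, hw1, hpS, hsum, hwf⟩ := hcombo x hxconv
  have hpconv : ∀ j, p j ∈ convexHull ℝ S := fun j => subset_convexHull ℝ S (hpS j)
  have hjensen : g x ≤ ∑ j, w j * g (p j) := by
    have := hg.1.map_sum_le (fun j _ => hw0 j) hw1 (fun j _ => hpconv j)
    rw [hsum] at this
    simpa [smul_eq_mul] using this
  have hgf : ∀ j, g (p j) ≤ f (p j) := fun j => hg.2.2.1 _ (hpS j)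
  have hAB : ∑ j, w j * g (p j) ≤ ∑ j, w j * f (p j) :=
    Finset.sum_le_sum fun j _ => mul_le_mul_of_nonneg_left (hgf j) (hw0 j)
  have hBg : ∑ j, w j * f (p j) ≤ g x := le_trans hwf (hhg x hxconv)
  have hA : ∑ j, w j * g (p j) = g x := le_antisymm (by linarith) hjensen
  have hB : ∑ j, w j * f (p j) = g x := le_antisymm hBg (by linarith)
  have hterm : ∀ j, w j * (f (p j) - g (p j)) = 0 := by
    have hsum0 : ∑ j, w j * (f (p j) - g (p j)) = 0 := by
      simp only [mul_sub]
      rw [Finset.sum_sub_distrib, hA, hB]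
      ring
    intro j
    exact (Finset.sum_eq_zero_iff_of_nonneg
      (fun i _ => mul_nonneg (hw0 i) (sub_nonneg.2 (hgf i)))).1 hsum0 j (Finset.mem_univ j)
  -- linear part
  have hlin : ∑ j, w j * (∑ i, c i * p j i) = ∑ i, c i * x i := by
    calc ∑ j, w j * (∑ i, c i * p j i) = ∑ j, ∑ i, w j * (c i * p j i) := by
          simp [Finset.mul_sum]
    _ = ∑ i, ∑ j, w j * (c i * p j i) := Finset.sum_comm
    _ = ∑ i, c i * x i := by
        refine Finset.sum_congr rfl fun i _ => ?_
        rw [← hsum]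
        rw [Finset.sum_apply, Finset.mul_sum]
        exact Finset.sum_congr rfl fun j _ => by simp [Pi.smul_apply, smul_eq_mul]; ring
  -- the argmin set
  set T := {y ∈ convexHull ℝ S | ∀ z ∈ convexHull ℝ S,
      g y + ∑ i, c i * y i ≤ g z + ∑ i, c i * z i} with hTdef
  have hxT : x ∈ T := ⟨hxconv, hxmin⟩
  have hxextT : x ∈ T.extremePoints ℝ := ⟨hxT, hxext⟩
  have hTconv : Convex ℝ T := by
    intro y hy z hz a b ha hb hab
    refine ⟨(convex_convexHull ℝ S) hy.1 hz.1 ha hb hab, ?_⟩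
    intro u hu
    have h1 : g (a • y + b • z) ≤ a * g y + b * g z := by
      have := hg.1.2 hy.1 hz.1 ha hb hab
      simpa [smul_eq_mul] using this
    have h2 : ∑ i, c i * (a • y + b • z) i
        = a * (∑ i, c i * y i) + b * (∑ i, c i * z i) := by
      rw [Finset.mul_sum, Finset.mul_sum, ← Finset.sum_add_distrib]
      refine Finset.sum_congr rfl fun i _ => ?_
      simp only [Pi.add_apply, Pi.smul_apply, smul_eq_mul]
      ring
    have hy2 := hy.2 u hu
    have hz2 := hz.2 u hu
    have hab' : a * (g u + ∑ i, c i * u i) + b * (g u + ∑ i, c i * u i)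
        = g u + ∑ i, c i * u i := by rw [← add_mul, hab, one_mul]
    calc g (a • y + b • z) + ∑ i, c i * (a • y + b • z) i
        ≤ (a * g y + b * g z) + (a * (∑ i, c i * y i) + b * (∑ i, c i * z i)) := by
          rw [h2]; linarith
    _ = a * (g y + ∑ i, c i * y i) + b * (g z + ∑ i, c i * z i) := by ring
    _ ≤ a * (g u + ∑ i, c i * u i) + b * (g u + ∑ i, c i * u i) := by
          have hyu := mul_le_mul_of_nonneg_left hy2 ha
          have hzu := mul_le_mul_of_nonneg_left hz2 hb
          linarith
    _ = g u + ∑ i, c i * u i := hab'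
  -- each p j with positive weight is in T
  have hphi : ∀ j, 0 < w j → p j ∈ T := by
    intro j hj
    refine ⟨hpconv j, ?_⟩
    intro z hz
    have hgez : g x + ∑ i, c i * x i ≤ g z + ∑ i, c i * z i := hxmin z hz
    have hgep : ∀ j', g x + ∑ i, c i * x i ≤ g (p j') + ∑ i, c i * p j' i :=
      fun j' => hxmin (p j') (hpconv j')
    have hsumphi : ∑ j', w j' * ((g (p j') + ∑ i, c i * p j' i)
        - (g x + ∑ i, c i * x i)) = 0 := by
      have e1 : ∑ j', w j' * (g (p j') + ∑ i, c i * p j' i)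
          = g x + ∑ i, c i * x i := by
        simp only [mul_add]
        rw [Finset.sum_add_distrib, hA, hlin]
      have e2 : ∑ j' : Fin (n+2), w j' * (g x + ∑ i, c i * x i)
          = g x + ∑ i, c i * x i := by
        rw [← Finset.sum_mul, hw1, one_mul]
      simp only [mul_sub]
      rw [Finset.sum_sub_distrib, e1, e2, sub_self]
    have hzero : w j * ((g (p j) + ∑ i, c i * p j i) - (g x + ∑ i, c i * x i)) = 0 :=
      (Finset.sum_eq_zero_iff_of_nonneg (fun j' _ =>
        mul_nonneg (hw0 j') (sub_nonneg.2 (hgep j')))).1 hsumphi j (Finset.mem_univ j)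
    have heq : g (p j) + ∑ i, c i * p j i = g x + ∑ i, c i * x i := by
      rcases mul_eq_zero.1 hzero with hc0 | hc0
      · exact absurd hc0 hj.ne'
      · linarith
    rw [heq]
    exact hgez
  -- modify p to land in T everywhere
  set p' : Fin (n+2) → (Fin n → ℝ) := fun j => if h : 0 < w j then p j else x with hp'def
  have hp'T : ∀ j, p' j ∈ T := by
    intro j
    simp only [hp'def]
    split
    · exact hphi j ‹_›
    · exact hxT
  have hsum' : ∑ j, w j • p' j = x := by
    rw [← hsum]
    refine Finset.sum_congr rfl fun j _ => ?_
    simp only [hp'def]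
    split
    · rfl
    · have : w j = 0 := le_antisymm (not_lt.1 ‹_›) (hw0 j)
      rw [this, zero_smul, zero_smul]
  have heqx := extreme_eq_of_combo hTconv hxextT hw0 hw1 hp'T hsum'
  have hex : ∃ j, 0 < w j := by
    by_contra hc
    push_neg at hc
    have : ∑ j, w j = 0 := Finset.sum_eq_zero fun j _ => le_antisymm (hc j) (hw0 j)
    rw [hw1] at this
    norm_num at this
  obtain ⟨j, hj⟩ := hex
  have hpj : p j = x := by
    have := heqx j hj
    simpa only [hp'def, dif_pos hj] using this
  constructor
  · rw [← hpj]; exact hpS j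
  · have := hterm j
    rcases mul_eq_zero.1 this with hc0 | hc0
    · exact absurd hc0 hj.ne'
    · rw [← hpj]; linarith
end

section
/- Let S ⊆ ℝⁿ be compact, f : S → ℝ lower semi-continuous with convex envelope f̂ : conv(S) → ℝ. Then every extreme point of epi(f̂) belongs to epi(f); in particular if (x, f̂(x)) is an extreme point of epi(f̂) then x ∈ S and f(x) = f̂(x). -/
open Set Filter Topology Module Pointwise

lemma lsc_bddBelow {n : ℕ} {S : Set (Fin n → ℝ)} {f : (Fin n → ℝ) → ℝ}
    (hS : IsCompact S) (hf : LowerSemicontinuousOn f S) :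
    ∃ m : ℝ, ∀ x ∈ S, m ≤ f x := by
  rcases S.eq_empty_or_nonempty with rfl | hne
  · exact ⟨0, by simp⟩
  -- for each x ∈ S, an open set V x ∋ x with f > f x - 1 on V x ∩ S
  have key : ∀ x ∈ S, ∃ V : Set (Fin n → ℝ), IsOpen V ∧ x ∈ V ∧
      ∀ y ∈ V ∩ S, f x - 1 < f y := by
    intro x hx
    have := hf x hx (f x - 1) (by linarith)
    rw [eventually_nhdsWithin_iff] at this
    rcases eventually_nhds_iff.1 this with ⟨V, hV, hVo, hxV⟩
    exact ⟨V, hVo, hxV, fun y hy => hV y hy.1 hy.2⟩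
  choose V hVo hxV hVf using key
  obtain ⟨t, hcov⟩ := hS.elim_nhds_subcover' (fun x hx => V x hx)
    (fun x hx => (hVo x hx).mem_nhds (hxV x hx))
  have htne : t.Nonempty := by
    rcases hne with ⟨x, hx⟩
    rcases Set.mem_iUnion₂.1 (hcov hx) with ⟨y, hy, _⟩
    exact ⟨y, hy⟩
  refine ⟨(t.image fun x => f x.1 - 1).min' (htne.image _), fun x hx => ?_⟩
  rcases Set.mem_iUnion₂.1 (hcov hx) with ⟨y, hy, hxy⟩
  calc (t.image fun x => f x.1 - 1).min' (htne.image _) ≤ f y.1 - 1 :=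
        Finset.min'_le _ _ (Finset.mem_image_of_mem _ hy)
    _ ≤ f x := le_of_lt (hVf y.1 y.2 x ⟨hxy, hx⟩)

lemma sum_dite_fin {M : Type*} [AddCommMonoid M] {k N : ℕ} (hk : k ≤ N) (F : Fin k → M) :
    ∑ j : Fin N, (if h : (j : ℕ) < k then F ⟨j, h⟩ else 0) = ∑ i : Fin k, F i := by
  have h1 : ∑ j : Fin N, (if h : (j : ℕ) < k then F ⟨j, h⟩ else 0)
      = ∑ j ∈ Finset.range N, (if h : j < k then F ⟨j, h⟩ else 0) :=
    Fin.sum_univ_eq_sum_range (fun j => if h : j < k then F ⟨j, h⟩ else 0) N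
  have h2 : ∑ j ∈ Finset.range k, (if h : j < k then F ⟨j, h⟩ else 0)
      = ∑ j ∈ Finset.range N, (if h : j < k then F ⟨j, h⟩ else 0) :=
    Finset.sum_subset (Finset.range_subset_range.2 hk)
      (fun j _ hj => dif_neg (by simpa using hj))
  have h3 : ∑ j : Fin k, (if h : (j : ℕ) < k then F ⟨j, h⟩ else 0)
      = ∑ j ∈ Finset.range k, (if h : j < k then F ⟨j, h⟩ else 0) :=
    Fin.sum_univ_eq_sum_range (fun j => if h : j < k then F ⟨j, h⟩ else 0) k
  rw [h1, ← h2, ← h3]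
  exact Finset.sum_congr rfl fun j _ => by rw [dif_pos j.2]

lemma mem_convexHull_fin {V : Type*} [NormedAddCommGroup V] [NormedSpace ℝ V]
    [FiniteDimensional ℝ V] {A : Set V} {p : V} (hp : p ∈ convexHull ℝ A) :
    ∃ (w : Fin (finrank ℝ V + 1) → ℝ) (q : Fin (finrank ℝ V + 1) → V),
      (∀ i, 0 ≤ w i) ∧ ∑ i, w i = 1 ∧ (∀ i, q i ∈ A) ∧ ∑ i, w i • q i = p := by
  obtain ⟨ι, hι, z, w, hzA, hai, hw0, hw1, hwz⟩ := eq_pos_convex_span_of_mem_convexHull hp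
  set N := finrank ℝ V + 1 with hN
  have hne : Nonempty ι := by
    by_contra h
    rw [not_nonempty_iff] at h
    rw [Finset.univ_eq_empty, Finset.sum_empty] at hw1
    norm_num at hw1
  have hcard : Fintype.card ι ≤ N := by
    have h1 := hai.finrank_vectorSpan_add_one
    have h2 : finrank ℝ (vectorSpan ℝ (Set.range z)) ≤ finrank ℝ V :=
      Submodule.finrank_le _
    omega
  set k := Fintype.card ι with hkdef
  have e : Fin k ≃ ι := (Fintype.equivFin ι).symm
  refine ⟨fun j => if h : (j : ℕ) < k then w (e ⟨j, h⟩) else 0,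
    fun j => if h : (j : ℕ) < k then z (e ⟨j, h⟩) else z (Classical.arbitrary ι),
    ?_, ?_, ?_, ?_⟩
  · intro j
    by_cases h : (j : ℕ) < k
    · simp only [dif_pos h]; exact (hw0 _).le
    · simp only [dif_neg h]; exact le_refl 0
  · rw [sum_dite_fin hcard (fun i => w (e i)), e.sum_comp w]
    exact hw1
  · intro j
    by_cases h : (j : ℕ) < k
    · simp only [dif_pos h]; exact hzA (Set.mem_range_self _)
    · simp only [dif_neg h]; exact hzA (Set.mem_range_self _)
  · have key : ∀ j : Fin N,
        (if h : (j : ℕ) < k then w (e ⟨j, h⟩) else 0) •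
          (if h : (j : ℕ) < k then z (e ⟨j, h⟩) else z (Classical.arbitrary ι)) =
        (if h : (j : ℕ) < k then w (e ⟨j, h⟩) • z (e ⟨j, h⟩) else 0) := by
      intro j
      by_cases h : (j : ℕ) < k
      · rw [dif_pos h, dif_pos h, dif_pos h]
      · rw [dif_neg h, dif_neg h, dif_neg h, zero_smul]
    rw [Finset.sum_congr rfl (fun j _ => key j),
      sum_dite_fin hcard (fun i => w (e i) • z (e i)),
      e.sum_comp (fun i => w i • z i)]
    exact hwz

lemma isClosed_convexHull_epi {n : ℕ} {S : Set (Fin n → ℝ)} {f : (Fin n → ℝ) → ℝ}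
    (hS : IsCompact S) (hf : LowerSemicontinuousOn f S)
    {m : ℝ} (hm : ∀ x ∈ S, m ≤ f x) :
    IsClosed (convexHull ℝ {p : (Fin n → ℝ) × ℝ | p.1 ∈ S ∧ f p.1 ≤ p.2}) := by
  set A := {p : (Fin n → ℝ) × ℝ | p.1 ∈ S ∧ f p.1 ≤ p.2} with hA
  set N := finrank ℝ ((Fin n → ℝ) × ℝ) + 1 with hNdef
  apply IsSeqClosed.isClosed
  intro u p hu hup
  choose w q hw0 hw1 hqA hsum using fun k => mem_convexHull_fin (hu k)
  -- basic coordinates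
  have hzS : ∀ k i, (q k i).1 ∈ S := fun k i => (hqA k i).1
  have hfs : ∀ k i, f (q k i).1 ≤ (q k i).2 := fun k i => (hqA k i).2
  have hms : ∀ k i, m ≤ (q k i).2 := fun k i => (hm _ (hzS k i)).trans (hfs k i)
  -- coordinates of the sum equation
  have hxeq : ∀ k, ∑ i, w k i • (q k i).1 = (u k).1 := by
    intro k
    have := congrArg Prod.fst (hsum k)
    simpa [Prod.fst_sum, Prod.smul_fst] using this
  have hteq : ∀ k, ∑ i, w k i * (q k i).2 = (u k).2 := by
    intro k
    have := congrArg Prod.snd (hsum k)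
    simpa [Prod.snd_sum, Prod.smul_snd, smul_eq_mul] using this
  set sig : ℕ → Fin N → ℝ := fun k i => w k i * ((q k i).2 - m) with hsig
  have hsig0 : ∀ k i, 0 ≤ sig k i := fun k i =>
    mul_nonneg (hw0 k i) (sub_nonneg.2 (hms k i))
  have hsigsum : ∀ k, ∑ i, sig k i = (u k).2 - m := by
    intro k
    simp only [hsig, mul_sub]
    rw [Finset.sum_sub_distrib, hteq k, ← Finset.sum_mul, hw1 k, one_mul]
  -- bound on second coordinates
  have ht2 : Tendsto (fun k => (u k).2) atTop (𝓝 p.2) :=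
    (continuous_snd.tendsto p).comp hup
  obtain ⟨B, hB⟩ := ht2.bddAbove_range
  have hB' : ∀ k, (u k).2 ≤ B := fun k => hB (Set.mem_range_self k)
  have hsigB : ∀ k i, sig k i ∈ Icc (0:ℝ) (B - m) := by
    intro k i
    refine ⟨hsig0 k i, ?_⟩
    calc sig k i ≤ ∑ i', sig k i' :=
          Finset.single_le_sum (fun i' _ => hsig0 k i') (Finset.mem_univ i)
      _ = (u k).2 - m := hsigsum k
      _ ≤ B - m := by linarith [hB' k]
  have hlam01 : ∀ k i, w k i ∈ Icc (0:ℝ) 1 := by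
    intro k i
    refine ⟨hw0 k i, ?_⟩
    calc w k i ≤ ∑ i', w k i' :=
          Finset.single_le_sum (fun i' _ => hw0 k i') (Finset.mem_univ i)
      _ = 1 := hw1 k
  -- compactness
  set K := (Set.pi univ fun _ : Fin N => Icc (0:ℝ) 1) ×ˢ
      ((Set.pi univ fun _ : Fin N => S) ×ˢ (Set.pi univ fun _ : Fin N => Icc (0:ℝ) (B - m)))
    with hK
  have hKc : IsCompact K :=
    (isCompact_univ_pi fun _ => isCompact_Icc).prod
      ((isCompact_univ_pi fun _ => hS).prod (isCompact_univ_pi fun _ => isCompact_Icc))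
  set v : ℕ → (Fin N → ℝ) × (Fin N → Fin n → ℝ) × (Fin N → ℝ) :=
    fun k => (w k, fun i => (q k i).1, sig k) with hv
  have hvK : ∀ k, v k ∈ K := by
    intro k
    refine ⟨fun i _ => hlam01 k i, fun i _ => hzS k i, fun i _ => hsigB k i⟩
  obtain ⟨a, haK, φ, hφ, hconv⟩ := hKc.tendsto_subseq hvK
  obtain ⟨L, Z, Sg⟩ := a
  -- coordinatewise limits
  have hLt : ∀ i, Tendsto (fun k => w (φ k) i) atTop (𝓝 (L i)) := by
    intro i
    exact ((continuous_apply i).tendsto _).comp ((continuous_fst.tendsto _).comp hconv)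
  have hZt : ∀ i, Tendsto (fun k => (q (φ k) i).1) atTop (𝓝 (Z i)) := by
    intro i
    exact ((continuous_apply i).tendsto _).comp
      (((continuous_fst.comp continuous_snd).tendsto _).comp hconv)
  have hSgt : ∀ i, Tendsto (fun k => sig (φ k) i) atTop (𝓝 (Sg i)) := by
    intro i
    exact ((continuous_apply i).tendsto _).comp
      (((continuous_snd.comp continuous_snd).tendsto _).comp hconv)
  have hL01 : ∀ i, L i ∈ Icc (0:ℝ) 1 := fun i => haK.1 i (mem_univ i)
  have hZS : ∀ i, Z i ∈ S := fun i => haK.2.1 i (mem_univ i)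
  have hSg0 : ∀ i, 0 ≤ Sg i := fun i => (haK.2.2 i (mem_univ i)).1
  have hupφ : Tendsto (u ∘ φ) atTop (𝓝 p) := hup.comp hφ.tendsto_atTop
  have hx1 : Tendsto (fun k => (u (φ k)).1) atTop (𝓝 p.1) :=
    (continuous_fst.tendsto p).comp hupφ
  have hx2 : Tendsto (fun k => (u (φ k)).2) atTop (𝓝 p.2) :=
    (continuous_snd.tendsto p).comp hupφ
  -- limit identities
  have hsumL : ∑ i, L i = 1 := by
    have h1 : Tendsto (fun k => ∑ i, w (φ k) i) atTop (𝓝 (∑ i, L i)) :=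
      tendsto_finset_sum _ fun i _ => hLt i
    have h2 : Tendsto (fun k => ∑ i, w (φ k) i) atTop (𝓝 1) := by
      simpa [hw1] using (tendsto_const_nhds : Tendsto (fun _ : ℕ => (1:ℝ)) atTop (𝓝 1))
    exact tendsto_nhds_unique h1 h2
  have hxL : ∑ i, L i • Z i = p.1 := by
    have h1 : Tendsto (fun k => ∑ i, w (φ k) i • (q (φ k) i).1) atTop
        (𝓝 (∑ i, L i • Z i)) :=
      tendsto_finset_sum _ fun i _ => (hLt i).smul (hZt i)
    have h2 : Tendsto (fun k => ∑ i, w (φ k) i • (q (φ k) i).1) atTop (𝓝 p.1) := by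
      simpa [hxeq] using hx1
    exact tendsto_nhds_unique h1 h2
  have hSgL : ∑ i, Sg i = p.2 - m := by
    have h1 : Tendsto (fun k => ∑ i, sig (φ k) i) atTop (𝓝 (∑ i, Sg i)) :=
      tendsto_finset_sum _ fun i _ => hSgt i
    have h2 : Tendsto (fun k => ∑ i, sig (φ k) i) atTop (𝓝 (p.2 - m)) := by
      simpa [hsigsum] using hx2.sub tendsto_const_nhds
    exact tendsto_nhds_unique h1 h2
  -- index with positive weight
  have hjex : ∃ j, 0 < L j := by
    by_contra h
    push_neg at h
    have : ∀ i, L i = 0 := fun i => le_antisymm (h i) (hL01 i).1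
    rw [Finset.sum_congr rfl fun i _ => this i] at hsumL
    simp at hsumL
  obtain ⟨j, hj⟩ := hjex
  -- the lsc inequality at indices with positive weight
  have key : ∀ i, L i ≠ 0 → f (Z i) ≤ m + Sg i / L i := by
    intro i hLi0
    by_contra hcon
    push_neg at hcon
    set y := (m + Sg i / L i + f (Z i)) / 2 with hy
    have hy1 : m + Sg i / L i < y := by rw [hy]; linarith
    have hy2 : y < f (Z i) := by rw [hy]; linarith
    have hZin : Tendsto (fun k => (q (φ k) i).1) atTop (𝓝[S] (Z i)) := by
      rw [tendsto_nhdsWithin_iff]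
      exact ⟨hZt i, Eventually.of_forall fun k => hzS (φ k) i⟩
    have h1 : ∀ᶠ k in atTop, y < f (q (φ k) i).1 :=
      hZin.eventually (hf (Z i) (hZS i) y hy2)
    have hLpos : 0 < L i := lt_of_le_of_ne (hL01 i).1 (Ne.symm hLi0)
    have h2 : Tendsto (fun k => m + sig (φ k) i / w (φ k) i) atTop
        (𝓝 (m + Sg i / L i)) :=
      tendsto_const_nhds.add ((hSgt i).div (hLt i) hLi0)
    have h3 : ∀ᶠ k in atTop, m + sig (φ k) i / w (φ k) i < y :=
      h2.eventually_lt_const hy1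
    have h4 : ∀ᶠ k in atTop, 0 < w (φ k) i :=
      (hLt i).eventually_const_lt hLpos
    obtain ⟨k, hk1, hk3, hk4⟩ := (h1.and (h3.and h4)).exists
    have hwne : w (φ k) i ≠ 0 := ne_of_gt hk4
    have hseq : (q (φ k) i).2 = m + sig (φ k) i / w (φ k) i := by
      simp only [hsig]
      rw [mul_div_cancel_left₀ _ hwne]
      ring
    have hle := hfs (φ k) i
    rw [hseq] at hle
    linarith
  -- assemble the limit combination
  set T := ∑ i ∈ Finset.univ.filter (fun i => L i = 0), Sg i with hT
  have hT0 : 0 ≤ T := Finset.sum_nonneg fun i _ => hSg0 i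
  set sInf' : Fin N → ℝ := fun i =>
    if L i = 0 then f (Z i) else m + Sg i / L i + (if i = j then T / L j else 0) with hsInf
  set P : Fin N → (Fin n → ℝ) × ℝ := fun i => (Z i, sInf' i) with hP
  have hPA : ∀ i, P i ∈ A := by
    intro i
    refine ⟨hZS i, ?_⟩
    simp only [hP, hsInf]
    by_cases h : L i = 0
    · rw [if_pos h]
    · rw [if_neg h]
      have h1 := key i h
      have hLpos : 0 < L i := lt_of_le_of_ne (hL01 i).1 (Ne.symm h)
      have h2 : 0 ≤ (if i = j then T / L j else 0) := by
        by_cases hij : i = j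
        · rw [if_pos hij]; exact div_nonneg hT0 hj.le
        · rw [if_neg hij]
      linarith
  -- second coordinate identity
  have hsnd : ∀ i, L i * sInf' i =
      (m * L i + Sg i) + (if i = j then T else 0) - (if L i = 0 then Sg i else 0) := by
    intro i
    by_cases h : L i = 0
    · have hij : i ≠ j := by rintro rfl; exact hj.ne' h
      simp [hsInf, h, hij]
    · have hLpos : 0 < L i := lt_of_le_of_ne (hL01 i).1 (Ne.symm h)
      by_cases hij : i = j
      · subst hij
        simp only [hsInf, if_neg h, if_pos rfl]
        field_simp
        simp only [if_true, sub_zero]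
        field_simp
      · simp only [hsInf, if_neg h, if_neg hij]
        field_simp
        simp only [mul_zero, add_zero, sub_zero]
  have e1 : ∑ i, (m * L i + Sg i) = p.2 := by
    rw [Finset.sum_add_distrib, ← Finset.mul_sum, hsumL, hSgL]
    ring
  have e2 : ∑ i, (if i = j then T else 0) = T := by
    rw [Finset.sum_ite_eq' Finset.univ j (fun _ => T)]
    exact if_pos (Finset.mem_univ j)
  have e3 : ∑ i, (if L i = 0 then Sg i else 0) = T := by
    rw [hT, Finset.sum_filter]
  have hsum2 : ∑ i, L i * sInf' i = p.2 := by
    rw [Finset.sum_congr rfl fun i _ => hsnd i, Finset.sum_sub_distrib,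
      Finset.sum_add_distrib, e1, e2, e3]
    ring
  have hfinal : ∑ i, L i • P i = p := by
    apply Prod.ext
    · rw [Prod.fst_sum]
      simpa [hP, Prod.smul_fst] using hxL
    · rw [Prod.snd_sum]
      simpa [hP, Prod.smul_snd, smul_eq_mul] using hsum2
  rw [← hfinal]
  have hmem := Finset.centerMass_mem_convexHull (Finset.univ (α := Fin N))
    (fun i _ => (hL01 i).1) (by rw [hsumL]; norm_num) (fun i _ => hPA i)
  rwa [Finset.centerMass_eq_of_sum_1 _ _ hsumL] at hmem

/-- every extreme point of `epi f̂` belongs to `epi f`; in particular, if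
`(x, f̂ x)` is an extreme point of `epi f̂`, then `x ∈ S` and `f x = f̂ x`. -/
theorem extremePoints_epigraph_envelope_subset (n : ℕ) (S : Set (Fin n → ℝ))
    (f g : (Fin n → ℝ) → ℝ) (hScomp : IsCompact S)
    (hf : LowerSemicontinuousOn f S) (hg : IsConvexEnvelopeOn S f g) :
    (∀ p ∈ Set.extremePoints ℝ
        {p : (Fin n → ℝ) × ℝ | p.1 ∈ convexHull ℝ S ∧ g p.1 ≤ p.2},
      p.1 ∈ S ∧ f p.1 ≤ p.2) ∧
    ∀ x : Fin n → ℝ, (x, g x) ∈ Set.extremePoints ℝ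
        {p : (Fin n → ℝ) × ℝ | p.1 ∈ convexHull ℝ S ∧ g p.1 ≤ p.2} →
      x ∈ S ∧ f x = g x := by
  rcases S.eq_empty_or_nonempty with rfl | hSne
  · constructor
    · intro p hp
      have := hp.1.1
      simp [convexHull_empty] at this
    · intro x hx
      have := hx.1.1
      simp [convexHull_empty] at this
  set E := {p : (Fin n → ℝ) × ℝ | p.1 ∈ convexHull ℝ S ∧ g p.1 ≤ p.2} with hE
  set A := {p : (Fin n → ℝ) × ℝ | p.1 ∈ S ∧ f p.1 ≤ p.2} with hA
  set C := convexHull ℝ A with hC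
  obtain ⟨m, hm⟩ := lsc_bddBelow hScomp hf
  have hCclosed : IsClosed C := isClosed_convexHull_epi hScomp hf hm
  -- C is contained in (convexHull S) ×ˢ Ici m
  have hCsub : C ⊆ (convexHull ℝ S) ×ˢ (Ici m) := by
    apply convexHull_min
    · rintro ⟨z, s⟩ ⟨hzS, hfz⟩
      exact ⟨subset_convexHull ℝ S hzS, le_trans (hm z hzS) hfz⟩
    · exact (convex_convexHull ℝ S).prod (convex_Ici m)
  -- C is upward closed
  have hCup : ∀ p ∈ C, ∀ t, p.2 ≤ t → (p.1, t) ∈ C := by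
    rintro p hp t hpt
    have hδ : (0:ℝ) ≤ t - p.2 := by linarith
    have hsub : A + ({((0 : Fin n → ℝ), t - p.2)} : Set ((Fin n → ℝ) × ℝ)) ⊆ A := by
      rintro r ⟨a, ha, b, hb, rfl⟩
      rcases mem_singleton_iff.1 hb with rfl
      have hfst : (a + ((0:Fin n → ℝ), t - p.2)).1 = a.1 := by simp
      have hsnd : (a + ((0:Fin n → ℝ), t - p.2)).2 = a.2 + (t - p.2) := by simp
      refine ⟨by rw [hfst]; exact ha.1, ?_⟩
      rw [hfst, hsnd]
      linarith [ha.2]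
    have hb0 : ((0 : Fin n → ℝ), t - p.2) ∈ convexHull ℝ {((0 : Fin n → ℝ), t - p.2)} :=
      subset_convexHull ℝ _ rfl
    have h1 : p + ((0 : Fin n → ℝ), t - p.2) ∈ convexHull ℝ A + convexHull ℝ {((0 : Fin n → ℝ), t - p.2)} :=
      Set.add_mem_add hp hb0
    rw [← convexHull_add] at h1
    have h2 := convexHull_mono hsub h1
    have : p + ((0 : Fin n → ℝ), t - p.2) = (p.1, t) := by
      ext <;> simp
    rwa [this] at h2
  -- every x in convexHull S has some t with (x,t) ∈ C
  have hproj : ∀ x ∈ convexHull ℝ S, ∃ t, (x, t) ∈ C := by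
    intro x hx
    have himg : (LinearMap.fst ℝ (Fin n → ℝ) ℝ) '' C = convexHull ℝ ((LinearMap.fst ℝ (Fin n → ℝ) ℝ) '' A) :=
      LinearMap.image_convexHull _ A
    have hAS : (LinearMap.fst ℝ (Fin n → ℝ) ℝ) '' A = S := by
      apply Set.Subset.antisymm
      · rintro _ ⟨⟨z, s⟩, hz, rfl⟩
        exact hz.1
      · intro z hz
        exact ⟨(z, f z), ⟨hz, le_refl _⟩, rfl⟩
    rw [hAS] at himg
    have : x ∈ (LinearMap.fst ℝ (Fin n → ℝ) ℝ) '' C := by rw [himg]; exact hx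
    rcases this with ⟨p, hpC, hpx⟩
    refine ⟨p.2, ?_⟩
    have hxp : (x, p.2) = p := Prod.ext (show p.1 = x from hpx).symm rfl
    rwa [hxp]
  -- the lower envelope function determined by C
  set h : (Fin n → ℝ) → ℝ := fun x => sInf {t | (x, t) ∈ C} with hh
  have hsecne : ∀ x ∈ convexHull ℝ S, {t | (x, t) ∈ C}.Nonempty := fun x hx => hproj x hx
  have hsecbdd : ∀ x : Fin n → ℝ, BddBelow {t | (x, t) ∈ C} := by
    intro x
    exact ⟨m, fun t ht => (hCsub ht).2⟩
  have hsecclosed : ∀ x : Fin n → ℝ, IsClosed {t | (x, t) ∈ C} := by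
    intro x
    have : {t | (x, t) ∈ C} = (fun t => ((x : Fin n → ℝ), t)) ⁻¹' C := rfl
    rw [this]
    exact hCclosed.preimage (Continuous.prodMk_right x)
  have hmemC : ∀ x ∈ convexHull ℝ S, (x, h x) ∈ C := by
    intro x hx
    exact (hsecclosed x).csInf_mem (hsecne x hx) (hsecbdd x)
  have hhle : ∀ x t, (x, t) ∈ C → h x ≤ t := by
    intro x t ht
    exact csInf_le (hsecbdd x) ht
  have hhf : ∀ x ∈ S, h x ≤ f x := by
    intro x hx
    exact hhle x (f x) (subset_convexHull ℝ A ⟨hx, le_refl _⟩)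
  have hhconv : ConvexOn ℝ (convexHull ℝ S) h := by
    refine ⟨convex_convexHull ℝ S, ?_⟩
    intro x hx y hy a b ha hb hab
    have h1 : a • ((x, h x) : (Fin n → ℝ) × ℝ) + b • ((y, h y) : (Fin n → ℝ) × ℝ) ∈ C :=
      (convex_convexHull ℝ A) (hmemC x hx) (hmemC y hy) ha hb hab
    have h2 : a • ((x, h x) : (Fin n → ℝ) × ℝ) + b • ((y, h y) : (Fin n → ℝ) × ℝ)
        = (a • x + b • y, a * h x + b * h y) := rfl
    rw [h2] at h1
    exact hhle _ _ h1
  have hhlsc : LowerSemicontinuousOn h (convexHull ℝ S) := by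
    intro x hx y hy
    by_contra hcon
    rw [Filter.not_eventually] at hcon
    have hfreq : ∃ᶠ x' in 𝓝[convexHull ℝ S] x, (x', y) ∈ C := by
      refine (hcon.and_eventually self_mem_nhdsWithin).mono ?_
      rintro x' ⟨hx'1, hx'2⟩
      push_neg at hx'1
      exact hCup (x', h x') (hmemC x' hx'2) y hx'1
    have hfreq2 : ∃ᶠ x' in 𝓝 x, (x', y) ∈ C :=
      hfreq.filter_mono nhdsWithin_le_nhds
    have hxcl : x ∈ closure {x' | (x', y) ∈ C} :=
      mem_closure_iff_frequently.2 hfreq2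
    have hclosed : IsClosed {x' | (x', y) ∈ C} := by
      have : {x' | (x', y) ∈ C} = (fun x' : Fin n → ℝ => (x', y)) ⁻¹' C := rfl
      rw [this]
      exact hCclosed.preimage (continuous_id.prodMk continuous_const)
    rw [hclosed.closure_eq] at hxcl
    exact absurd (hhle x y hxcl) (not_le.2 hy)
  -- h ≤ g on the hull
  have hhg : ∀ x ∈ convexHull ℝ S, h x ≤ g x := hg.2.2.2 h hhconv hhlsc hhf
  -- E = C
  have hEC : E ⊆ C := by
    rintro ⟨x, t⟩ ⟨hx, hgt⟩
    exact hCup (x, h x) (hmemC x hx) t (le_trans (hhg x hx) (le_trans hgt (le_refl t)))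
  have hCE : C ⊆ E := by
    apply convexHull_min
    · rintro ⟨z, s⟩ ⟨hzS, hfz⟩
      exact ⟨subset_convexHull ℝ S hzS, le_trans (hg.2.2.1 z hzS) hfz⟩
    · exact hg.1.convex_epigraph
  have hECeq : E = C := Set.Subset.antisymm hEC hCE
  -- conclude via extreme points of a convex hull
  have hext : Set.extremePoints ℝ E ⊆ A := by
    rw [hECeq, hC]
    exact extremePoints_convexHull_subset
  constructor
  · intro p hp
    exact hext hp
  · intro x hx
    have hxA : ((x, g x) : (Fin n → ℝ) × ℝ) ∈ A := hext hx
    exact ⟨hxA.1, le_antisymm hxA.2 (hg.2.2.1 x hxA.1)⟩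
end

section
/- Let C ⊆ ℝᴺ be a nonempty compact set, and let w be a random vector drawn uniformly from the unit sphere in ℝᴺ. Then, with probability one, the linear function x ↦ wᵀx has a unique minimizer over C. -/
open MeasureTheory Metric

section Aux

open MeasureTheory Metric Set
open scoped Pointwise RealInnerProductSpace

namespace AeUniqueMinAux

variable {N : ℕ} (C : Set (EuclideanSpace ℝ (Fin N)))

noncomputable def m (x : EuclideanSpace ℝ (Fin N)) : ℝ :=
  sInf ((fun y => ⟪x, y⟫) '' C)

variable {C}

lemma bddBelow_img (hCcomp : IsCompact C) (x : EuclideanSpace ℝ (Fin N)) :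
    BddBelow ((fun y => ⟪x, y⟫) '' C) :=
  (hCcomp.image (Continuous.inner continuous_const continuous_id)).bddBelow

lemma exists_min (hC : C.Nonempty) (hCcomp : IsCompact C) (x : EuclideanSpace ℝ (Fin N)) :
    ∃ y ∈ C, (∀ z ∈ C, ⟪x, y⟫ ≤ ⟪x, z⟫) ∧ m C x = ⟪x, y⟫ := by
  obtain ⟨y, hyC, hymin⟩ := hCcomp.exists_isMinOn (f := fun y => (⟪x, y⟫ : ℝ)) hC
    ((Continuous.inner continuous_const continuous_id).continuousOn)
  refine ⟨y, hyC, fun z hz => hymin hz, ?_⟩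
  exact IsLeast.csInf_eq ⟨⟨y, hyC, rfl⟩, by rintro _ ⟨z, hz, rfl⟩; exact hymin hz⟩

lemma m_eq_of_min (hCcomp : IsCompact C) {x w : EuclideanSpace ℝ (Fin N)} (hx : x ∈ C)
    (hmin : ∀ z ∈ C, ⟪w, x⟫ ≤ ⟪w, z⟫) : m C w = ⟪w, x⟫ :=
  IsLeast.csInf_eq ⟨⟨x, hx, rfl⟩, by rintro _ ⟨z, hz, rfl⟩; exact hmin z hz⟩

lemma m_le (hCcomp : IsCompact C) {x : EuclideanSpace ℝ (Fin N)} {y : EuclideanSpace ℝ (Fin N)}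
    (hy : y ∈ C) : m C x ≤ ⟪x, y⟫ :=
  csInf_le (bddBelow_img hCcomp x) ⟨y, hy, rfl⟩

lemma m_smul (hC : C.Nonempty) (hCcomp : IsCompact C) {r : ℝ} (hr : 0 < r)
    (x : EuclideanSpace ℝ (Fin N)) : m C (r • x) = r * m C x := by
  obtain ⟨y, hyC, hymin, hmy⟩ := exists_min hC hCcomp x
  have h : ∀ z ∈ C, ⟪r • x, y⟫ ≤ ⟪r • x, z⟫ := by
    intro z hz
    rw [real_inner_smul_left, real_inner_smul_left]
    exact mul_le_mul_of_nonneg_left (hymin z hz) hr.le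
  rw [m_eq_of_min hCcomp hyC h, real_inner_smul_left, hmy]

lemma lip (hC : C.Nonempty) (hCcomp : IsCompact C) :
    ∃ R : NNReal, LipschitzWith R (m C) := by
  obtain ⟨R, hR⟩ := hCcomp.isBounded.exists_norm_le
  refine ⟨⟨max R 0, le_max_right _ _⟩, LipschitzWith.of_dist_le_mul fun x x' => ?_⟩
  have key : ∀ a b : EuclideanSpace ℝ (Fin N), m C a - m C b ≤ max R 0 * dist a b := by
    intro a b
    obtain ⟨y, hyC, hymin, hmy⟩ := exists_min hC hCcomp b
    have h1 : m C a ≤ ⟪a, y⟫ := m_le hCcomp hyC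
    have h2 : ⟪a - b, y⟫ ≤ ‖a - b‖ * ‖y‖ := real_inner_le_norm _ _
    have h3 : ‖y‖ ≤ max R 0 := le_max_of_le_left (hR y hyC)
    have h4 : ‖a - b‖ * ‖y‖ ≤ ‖a - b‖ * max R 0 :=
      mul_le_mul_of_nonneg_left h3 (norm_nonneg _)
    have h5 : ⟪a, y⟫ - ⟪b, y⟫ = ⟪a - b, y⟫ := (inner_sub_left _ _ _).symm
    rw [dist_eq_norm]
    nlinarith [norm_nonneg (a - b)]
  rw [Real.dist_eq, abs_sub_le_iff]
  constructor
  · exact (by linarith [key x x'] : m C x - m C x' ≤ max R 0 * dist x x')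
  · exact (by rw [dist_comm]; exact key x' x : m C x' - m C x ≤ max R 0 * dist x x')

lemma unique_of_diff (hC : C.Nonempty) (hCcomp : IsCompact C)
    {w : EuclideanSpace ℝ (Fin N)} (hd : DifferentiableAt ℝ (m C) w) :
    ∃! x : EuclideanSpace ℝ (Fin N), x ∈ C ∧ ∀ y ∈ C, ⟪w, x⟫ ≤ ⟪w, y⟫ := by
  obtain ⟨x₀, hx₀C, hx₀min, -⟩ := exists_min hC hCcomp w
  have hL := hd.hasFDerivAt
  set L := fderiv ℝ (m C) w with hLdef
  have key : ∀ x ∈ C, (∀ y ∈ C, ⟪w, x⟫ ≤ ⟪w, y⟫) → ∀ v, L v = ⟪v, x⟫ := by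
    intro x hxC hxmin v
    have hmw : m C w = ⟪w, x⟫ := m_eq_of_min hCcomp hxC hxmin
    have hline : HasDerivAt (fun t : ℝ => w + t • v) v 0 := by
      simpa using ((hasDerivAt_id (0 : ℝ)).smul_const v).const_add w
    have hg : HasDerivAt (fun t : ℝ => m C (w + t • v)) (L v) 0 := by
      have h0 := hL.comp_hasDerivAt_of_eq (0:ℝ) hline (by simp)
      exact h0
    have hc : HasDerivAt (fun t : ℝ => t * ⟪v, x⟫) (⟪v, x⟫) 0 := by
      simpa using (hasDerivAt_id (0 : ℝ)).mul_const (⟪v, x⟫)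
    have hh : HasDerivAt (fun t : ℝ => m C (w + t • v) - t * ⟪v, x⟫) (L v - ⟪v, x⟫) 0 :=
      hg.sub hc
    have hmax : IsLocalMax (fun t : ℝ => m C (w + t • v) - t * ⟪v, x⟫) 0 := by
      apply Filter.Eventually.of_forall
      intro t
      have h1 : m C (w + t • v) ≤ ⟪w + t • v, x⟫ := m_le hCcomp hxC
      have h2 : ⟪w + t • v, x⟫ = ⟪w, x⟫ + t * ⟪v, x⟫ := by
        rw [inner_add_left, real_inner_smul_left]
      simp only [zero_smul, add_zero, zero_mul, sub_zero]
      rw [hmw]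
      linarith
    have := hmax.hasDerivAt_eq_zero hh
    linarith
  refine ⟨x₀, ⟨hx₀C, hx₀min⟩, ?_⟩
  rintro x₁ ⟨hx₁C, hx₁min⟩
  exact ext_inner_left ℝ fun v => by
    rw [← key x₁ hx₁C hx₁min v, ← key x₀ hx₀C hx₀min v]

end AeUniqueMinAux


open AeUniqueMinAux
end Aux

open AeUniqueMinAux Set
open scoped Pointwise RealInnerProductSpace

/-- for a nonempty compact `C ⊆ ℝᴺ`, for almost every `w` drawn from the
uniform distribution on the unit sphere, the linear function `x ↦ ⟪w, x⟫` has a unique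
minimizer over `C`. -/
theorem ae_unique_minimizer_of_random_linear (N : ℕ)
    (C : Set (EuclideanSpace ℝ (Fin N))) (hC : C.Nonempty) (hCcomp : IsCompact C) :
    ∀ᵐ (w : sphere (0 : EuclideanSpace ℝ (Fin N)) 1)
        ∂((volume : Measure (EuclideanSpace ℝ (Fin N))).toSphere),
      ∃! x : EuclideanSpace ℝ (Fin N),
        x ∈ C ∧ ∀ y ∈ C, inner (𝕜 := ℝ) (w : EuclideanSpace ℝ (Fin N)) x ≤
          inner (𝕜 := ℝ) (w : EuclideanSpace ℝ (Fin N)) y := by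
  rw [ae_iff]
  have hE : True := trivial
  -- the set of non-differentiability points of `m C`
  obtain ⟨R, hlip⟩ := lip hC hCcomp
  have hrad : volume {x : EuclideanSpace ℝ (Fin N) | ¬ DifferentiableAt ℝ (m C) x} = 0 := by
    have := hlip.ae_differentiableAt (μ := (volume : Measure (EuclideanSpace ℝ (Fin N))))
    rwa [ae_iff] at this
  set S : Set (sphere (0 : EuclideanSpace ℝ (Fin N)) 1) := {w | ¬ DifferentiableAt ℝ (m C) (w : EuclideanSpace ℝ (Fin N))} with hSdef
  have hSmeas : MeasurableSet S := by
    have : MeasurableSet {x : EuclideanSpace ℝ (Fin N) | DifferentiableAt ℝ (m C) x} :=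
      measurableSet_of_differentiableAt ℝ (m C)
    exact continuous_subtype_val.measurable this.compl
  apply measure_mono_null (t := S)
  · intro w hw
    simp only [Set.mem_setOf_eq] at hw ⊢
    intro hdiff
    exact hw (unique_of_diff hC hCcomp hdiff)
  · rw [Measure.toSphere_apply' _ hSmeas]
    have hnull : volume (Ioo (0 : ℝ) 1 • (Subtype.val '' S)) = 0 := by
      apply measure_mono_null _ hrad
      rintro x hx
      rw [Set.mem_smul] at hx
      obtain ⟨r, hr, y, hy, rfl⟩ := hx
      obtain ⟨w, hwS, rfl⟩ := hy
      simp only [Set.mem_setOf_eq]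
      intro hdiff
      apply hwS
      have hr0 : (0 : ℝ) < r := hr.1
      have heq : (m C) = fun x : EuclideanSpace ℝ (Fin N) => r⁻¹ * m C (r • x) := by
        funext z
        rw [m_smul hC hCcomp hr0 z]
        field_simp
      show DifferentiableAt ℝ (m C) (w : EuclideanSpace ℝ (Fin N))
      rw [heq]
      have hsm : DifferentiableAt ℝ (fun z : EuclideanSpace ℝ (Fin N) => r • z) (w : EuclideanSpace ℝ (Fin N)) :=
        (differentiableAt_id.const_smul r)
      exact ((hdiff.comp (w : EuclideanSpace ℝ (Fin N)) hsm)).const_mul r⁻¹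
    rw [hnull, mul_zero]
end

section
/- Let M₁,…,Mₙ be nonempty compact convex sets with Mᵢ ⊆ ℝ^{nᵢ}, N = Σ nᵢ, A ∈ ℝ^{m×N}, b ∈ ℝᵐ, and suppose {x ∈ M₁×⋯×Mₙ : Ax ≤ b} is nonempty. Let w be uniform on the unit sphere of ℝᴺ. Then with probability one the problem minimize wᵀx subject to Ax ≤ b, xᵢ ∈ Mᵢ has a unique solution x, and letting J = {j : (Ax−b)ⱼ = 0} be its active set, the number of indices i for which xᵢ is not an extreme point of Mᵢ is at most |J|. -/
open MeasureTheory Metric Set RealInnerProductSpace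
open scoped Pointwise

noncomputable section AuxSupport


variable {E : Type*} [NormedAddCommGroup E] [InnerProductSpace ℝ E]

/-- The support function (inf of the linear functional over `K`). -/
def sfn (K : Set E) (w : E) : ℝ := sInf ((fun x => ⟪w, x⟫) '' K)

lemma sfn_le {K : Set E} (hK : IsCompact K) {w x : E} (hx : x ∈ K) :
    sfn K w ≤ ⟪w, x⟫ :=
  csInf_le ((hK.image (continuous_const.inner continuous_id)).bddBelow)
    (Set.mem_image_of_mem _ hx)

lemma sfn_eq {K : Set E} (hK : IsCompact K) {w x : E} (hx : x ∈ K)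
    (hxm : ∀ z ∈ K, ⟪w, x⟫ ≤ ⟪w, z⟫) : sfn K w = ⟪w, x⟫ := by
  refine le_antisymm (sfn_le hK hx) (le_csInf ⟨_, Set.mem_image_of_mem _ hx⟩ ?_)
  rintro r ⟨z, hz, rfl⟩
  exact hxm z hz

lemma sfn_lipschitz {K : Set E} (hK : IsCompact K) (hne : K.Nonempty) :
    ∃ C : NNReal, LipschitzWith C (sfn K) := by
  obtain ⟨R, hR⟩ := hK.isBounded.subset_closedBall 0
  refine ⟨⟨max R 0, le_max_right _ _⟩, LipschitzWith.of_dist_le_mul fun v u => ?_⟩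
  have key : ∀ v u : E, sfn K v ≤ sfn K u + max R 0 * dist v u := by
    intro v u
    have h : sfn K v - max R 0 * dist v u ≤ sfn K u := by
      refine le_csInf (hne.image _) ?_
      rintro r ⟨z, hz, rfl⟩
      show sfn K v - max R 0 * dist v u ≤ ⟪u, z⟫
      rw [dist_eq_norm]
      have h1 : sfn K v ≤ ⟪v, z⟫ := sfn_le hK hz
      have h3 : ⟪v - u, z⟫ ≤ ‖v - u‖ * ‖z‖ := real_inner_le_norm _ _
      have h2' : ⟪v, z⟫ - ⟪u, z⟫ = ⟪v - u, z⟫ := (inner_sub_left _ _ _).symm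
      have hz' : ‖z‖ ≤ max R 0 := le_trans (mem_closedBall_zero_iff.1 (hR hz)) (le_max_left _ _)
      have h4 : ‖v - u‖ * ‖z‖ ≤ max R 0 * ‖v - u‖ := by
        rw [mul_comm]; exact mul_le_mul_of_nonneg_right hz' (norm_nonneg _)
      have hd : dist v u = ‖v - u‖ := dist_eq_norm _ _
      linarith [h1, h3, h2', h4]
    linarith
  have k1 := key v u
  have k2 := key u v
  rw [dist_comm u v] at k2
  rw [Real.dist_eq, abs_sub_le_iff]
  show sfn K v - sfn K u ≤ max R 0 * dist v u ∧ sfn K u - sfn K v ≤ max R 0 * dist v u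
  exact ⟨by linarith, by linarith⟩


lemma grad_eq {K : Set E} (hK : IsCompact K) {w : E}
    (hd : DifferentiableAt ℝ (sfn K) w) {x : E} (hx : x ∈ K)
    (hxm : ∀ z ∈ K, ⟪w, x⟫ ≤ ⟪w, z⟫) : innerSL ℝ x = fderiv ℝ (sfn K) w := by
  set g : E → ℝ := fun v => ⟪x, v⟫ - sfn K v with hg
  have hg0 : g w = 0 := by
    simp only [hg]
    rw [sfn_eq hK hx hxm, real_inner_comm, sub_self]
  have hgmin : ∀ v, (0:ℝ) ≤ g v := by
    intro v
    have := sfn_le (w := v) hK hx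
    simp only [hg]
    rw [real_inner_comm]
    linarith
  have hloc : IsLocalMin g w := Filter.Eventually.of_forall fun v => by
    rw [hg0]; exact hgmin v
  have hgd : DifferentiableAt ℝ g w :=
    ((innerSL ℝ x).differentiableAt).sub hd
  have h0 := hloc.fderiv_eq_zero
  have : fderiv ℝ g w = innerSL ℝ x - fderiv ℝ (sfn K) w := by
    have : fderiv ℝ (fun v => (innerSL ℝ x) v) w = innerSL ℝ x := (innerSL ℝ x).fderiv
    show fderiv ℝ (fun v => (innerSL ℝ x) v - sfn K v) w = _
    rw [fderiv_fun_sub ((innerSL ℝ x).differentiableAt) hd]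
    congr 1
  rw [this] at h0
  rwa [sub_eq_zero] at h0

lemma unique_min {K : Set E} (hK : IsCompact K) {w : E}
    (hd : DifferentiableAt ℝ (sfn K) w) {x y : E} (hx : x ∈ K) (hy : y ∈ K)
    (hxm : ∀ z ∈ K, ⟪w, x⟫ ≤ ⟪w, z⟫) (hym : ∀ z ∈ K, ⟪w, y⟫ ≤ ⟪w, z⟫) : x = y := by
  have h1 := grad_eq hK hd hx hxm
  have h2 := grad_eq hK hd hy hym
  have h3 : innerSL ℝ x = innerSL ℝ y := h1.trans h2.symm
  have h4 : ⟪x, x - y⟫ = ⟪y, x - y⟫ := by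
    have := congrArg (fun (f : E →L[ℝ] ℝ) => f (x - y)) h3
    simpa using this
  have h5 : ⟪x - y, x - y⟫ = 0 := by
    rw [inner_sub_left, h4, sub_self]
  rw [inner_self_eq_zero, sub_eq_zero] at h5
  exact h5

lemma sfn_smul {K : Set E} (hne : K.Nonempty) {a : ℝ} (ha : 0 ≤ a) (w : E) :
    sfn K (a • w) = a * sfn K w := by
  have himg : (fun x => ⟪a • w, x⟫) '' K = a • ((fun x => ⟪w, x⟫) '' K) := by
    rw [← Set.image_smul, ← Set.image_comp]
    refine Set.image_congr fun x _ => ?_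
    simp [real_inner_smul_left, smul_eq_mul]
  rw [sfn, himg, Real.sInf_smul_of_nonneg ha, smul_eq_mul, sfn]

lemma diff_smul {K : Set E} (hne : K.Nonempty) {w : E} {a : ℝ} (ha : 0 < a)
    (hd : DifferentiableAt ℝ (sfn K) w) : DifferentiableAt ℝ (sfn K) (a • w) := by
  have hfun : sfn K = fun u => a • sfn K (a⁻¹ • u) := by
    funext u
    rw [smul_eq_mul, ← sfn_smul hne (le_of_lt ha), smul_smul, mul_inv_cancel₀ ha.ne', one_smul]
  rw [hfun]
  have h1 : DifferentiableAt ℝ (fun u : E => a⁻¹ • u) (a • w) :=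
    (differentiableAt_id.const_smul a⁻¹)
  have h2 : DifferentiableAt ℝ (sfn K) ((fun u : E => a⁻¹ • u) (a • w)) := by
    simp only [smul_smul, inv_mul_cancel₀ ha.ne', one_smul]
    exact hd
  exact (h2.comp (a • w) h1).const_smul a

lemma toSphere_null {E : Type*} [NormedAddCommGroup E] [NormedSpace ℝ E]
    [MeasurableSpace E] [BorelSpace E]
    (μ : Measure E) {D : Set E} (hDm : MeasurableSet D) (hD0 : μ D = 0)
    (hcone : ∀ r : ℝ, 0 < r → ∀ x ∈ D, r • x ∈ D) :
    μ.toSphere {w : sphere (0:E) 1 | (w:E) ∈ D} = 0 := by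
  have hms : MeasurableSet {w : sphere (0:E) 1 | (w:E) ∈ D} :=
    hDm.preimage continuous_subtype_val.measurable
  rw [Measure.toSphere_apply' μ hms]
  have hsub : Ioo (0:ℝ) 1 • ((↑) '' {w : sphere (0:E) 1 | (w:E) ∈ D}) ⊆ D := by
    rintro z hz
    rw [Set.mem_smul] at hz
    obtain ⟨r, hr, x, hx, rfl⟩ := hz
    obtain ⟨w, hw, rfl⟩ := hx
    exact hcone r hr.1 _ hw
  rw [measure_mono_null hsub hD0, mul_zero]

lemma K_compact (n m : ℕ) (d : Fin n → ℕ)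
    (M : ∀ i : Fin n, Set (Fin (d i) → ℝ)) (hMcomp : ∀ i, IsCompact (M i))
    (A : Matrix (Fin m) ((i : Fin n) × Fin (d i)) ℝ) (b : Fin m → ℝ) :
    IsCompact {x : EuclideanSpace ℝ ((i : Fin n) × Fin (d i)) |
      (∀ j, A.mulVec x j ≤ b j) ∧ ∀ i, (fun j => x ⟨i, j⟩) ∈ M i} := by
  have hproj : ∀ s : (i : Fin n) × Fin (d i),
      Continuous (fun x : EuclideanSpace ℝ ((i : Fin n) × Fin (d i)) => x s) :=
    fun s => (EuclideanSpace.proj s).continuous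
  -- the product-of-blocks set is compact
  set Ψ : (∀ i : Fin n, Fin (d i) → ℝ) → EuclideanSpace ℝ ((i : Fin n) × Fin (d i)) :=
    fun f => WithLp.toLp 2 (fun s => f s.1 s.2) with hΨ
  have hΨc : Continuous Ψ := by
    apply (PiLp.continuous_toLp 2 (fun _ : (i : Fin n) × Fin (d i) => ℝ)).comp
    exact continuous_pi fun s => (continuous_apply s.2).comp (continuous_apply s.1)
  have hT : IsCompact {x : EuclideanSpace ℝ ((i : Fin n) × Fin (d i)) |
      ∀ i, (fun j => x ⟨i, j⟩) ∈ M i} := by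
    have himg : {x : EuclideanSpace ℝ ((i : Fin n) × Fin (d i)) |
        ∀ i, (fun j => x ⟨i, j⟩) ∈ M i} = Ψ '' (Set.univ.pi M) := by
      ext x
      constructor
      · intro hx
        exact ⟨fun i j => x ⟨i, j⟩, fun i _ => hx i, rfl⟩
      · rintro ⟨f, hf, rfl⟩
        intro i
        exact hf i (Set.mem_univ i)
    rw [himg]
    exact ((isCompact_univ_pi hMcomp).image hΨc)
  have hclosed : IsClosed {x : EuclideanSpace ℝ ((i : Fin n) × Fin (d i)) |
      ∀ j, A.mulVec x j ≤ b j} := by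
    have : {x : EuclideanSpace ℝ ((i : Fin n) × Fin (d i)) | ∀ j, A.mulVec x j ≤ b j}
        = ⋂ j, {x : EuclideanSpace ℝ ((i : Fin n) × Fin (d i)) | A.mulVec x j ≤ b j} := by ext x; simp [Set.mem_iInter]
    rw [this]
    refine isClosed_iInter fun j => ?_
    have hcont : Continuous (fun x : EuclideanSpace ℝ ((i : Fin n) × Fin (d i)) =>
        A.mulVec x j) := by
      have : (fun x : EuclideanSpace ℝ ((i : Fin n) × Fin (d i)) => A.mulVec x j)
          = fun x => ∑ s, A j s * x s := by
        funext x; rfl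
      rw [this]
      exact continuous_finset_sum _ fun s _ => continuous_const.mul (hproj s)
    exact isClosed_le hcont continuous_const
  have : {x : EuclideanSpace ℝ ((i : Fin n) × Fin (d i)) |
      (∀ j, A.mulVec x j ≤ b j) ∧ ∀ i, (fun j => x ⟨i, j⟩) ∈ M i}
      = {x : EuclideanSpace ℝ ((i : Fin n) × Fin (d i)) | ∀ i, (fun j => x ⟨i, j⟩) ∈ M i} ∩ {x | ∀ j, A.mulVec x j ≤ b j} := by
    ext x; exact ⟨fun h => ⟨h.2, h.1⟩, fun h => ⟨h.2, h.1⟩⟩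
  rw [this]
  exact hT.inter_right hclosed

lemma count_lemma (n m : ℕ) (d : Fin n → ℕ)
    (M : ∀ i : Fin n, Set (Fin (d i) → ℝ))
    (hMconv : ∀ i, Convex ℝ (M i))
    (A : Matrix (Fin m) ((i : Fin n) × Fin (d i)) ℝ) (b : Fin m → ℝ)
    (w x : EuclideanSpace ℝ ((i : Fin n) × Fin (d i)))
    (hx1 : ∀ j, A.mulVec x j ≤ b j) (hx2 : ∀ i, (fun j => x ⟨i, j⟩) ∈ M i)
    (hxm : ∀ y : EuclideanSpace ℝ ((i : Fin n) × Fin (d i)),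
      ((∀ j, A.mulVec y j ≤ b j) ∧ ∀ i, (fun j => y ⟨i, j⟩) ∈ M i) → ⟪w, x⟫ ≤ ⟪w, y⟫)
    (huniq : ∀ y : EuclideanSpace ℝ ((i : Fin n) × Fin (d i)),
      ((∀ j, A.mulVec y j ≤ b j) ∧ ∀ i, (fun j => y ⟨i, j⟩) ∈ M i) →
      (∀ z : EuclideanSpace ℝ ((i : Fin n) × Fin (d i)),
        ((∀ j, A.mulVec z j ≤ b j) ∧ ∀ i, (fun j => z ⟨i, j⟩) ∈ M i) → ⟪w, y⟫ ≤ ⟪w, z⟫) →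
      y = x) :
    {i : Fin n | (fun j => x ⟨i, j⟩) ∉ Set.extremePoints ℝ (M i)}.ncard ≤
      {j : Fin m | A.mulVec x j = b j}.ncard := by
  classical
  by_contra hlt
  push_neg at hlt
  set S := {i : Fin n | (fun j => x ⟨i, j⟩) ∉ Set.extremePoints ℝ (M i)} with hSdef
  set J := {j : Fin m | A.mulVec x j = b j} with hJdef
  -- choose block perturbation directions
  have hv : ∀ i : Fin n, ∃ (v : Fin (d i) → ℝ) (ε : ℝ), 0 < ε ∧ (i ∈ S → v ≠ 0) ∧
      ∀ t : ℝ, |t| ≤ ε → (fun j => x ⟨i, j⟩) + t • v ∈ M i := by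
    intro i
    by_cases hiS : i ∈ S
    · have hxi : (fun j => x ⟨i, j⟩) ∈ M i := hx2 i
      have hne : (fun j => x ⟨i, j⟩) ∉ Set.extremePoints ℝ (M i) := hiS
      rw [mem_extremePoints] at hne
      push_neg at hne
      obtain ⟨y₁, hy₁, y₂, hy₂, hseg, hneq⟩ := hne hxi
      obtain ⟨a, c, ha, hc, hac, hsum⟩ := hseg
      have hy12 : y₁ ≠ y₂ := by
        rintro rfl
        have : (a + c) • y₁ = (fun j => x ⟨i, j⟩) := by rw [add_smul]; exact hsum
        rw [hac, one_smul] at this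
        exact (hneq this) this
      refine ⟨y₁ - y₂, min a c, lt_min ha hc, fun _ => sub_ne_zero.2 hy12, fun t ht => ?_⟩
      rw [abs_le] at ht
      have h1 : 0 ≤ a + t := by have := ht.1; have := min_le_left a c; linarith
      have h2 : 0 ≤ c - t := by have := ht.2; have := min_le_right a c; linarith
      have h3 : (a + t) + (c - t) = 1 := by linarith
      have := hMconv i hy₁ hy₂ h1 h2 h3
      convert this using 1
      rw [← hsum]; module
    · exact ⟨0, 1, one_pos, fun h => absurd h hiS, fun t ht => by simpa using hx2 i⟩
  choose v ε hε hvne hvmem using hv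
  haveI : Fintype ↥S := Fintype.ofFinite _
  haveI : Fintype ↥J := Fintype.ofFinite _
  -- coefficient extension and direction
  set c : (↥S → ℝ) → Fin n → ℝ := fun t i => if h : i ∈ S then t ⟨i, h⟩ else 0 with hcdef
  set Dv : (↥S → ℝ) → EuclideanSpace ℝ ((i : Fin n) × Fin (d i)) :=
    fun t => WithLp.toLp 2 (fun s => c t s.1 * v s.1 s.2) with hDvdef
  have hDvadd : ∀ t t', Dv (t + t') = Dv t + Dv t' := by
    intro t t'; ext s
    show c (t + t') s.1 * v s.1 s.2 = c t s.1 * v s.1 s.2 + c t' s.1 * v s.1 s.2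
    have : c (t + t') s.1 = c t s.1 + c t' s.1 := by
      simp only [hcdef]; split <;> simp
    rw [this]; ring
  have hDvsmul : ∀ (r : ℝ) t, Dv (r • t) = r • Dv t := by
    intro r t; ext s
    show c (r • t) s.1 * v s.1 s.2 = r * (c t s.1 * v s.1 s.2)
    have : c (r • t) s.1 = r * c t s.1 := by
      simp only [hcdef]; split <;> simp
    rw [this]; ring
  -- the linear map to active constraints
  set T : (↥S → ℝ) →ₗ[ℝ] (↥J → ℝ) :=
    { toFun := fun t j => A.mulVec (Dv t) j.1
      map_add' := by
        intro t t'; funext j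
        change A.mulVec (Dv (t + t')) j.1 = A.mulVec (Dv t) j.1 + A.mulVec (Dv t') j.1
        rw [hDvadd, WithLp.ofLp_add, Matrix.mulVec_add]; rfl
      map_smul' := by
        intro r t; funext j
        change A.mulVec (Dv (r • t)) j.1 = r * A.mulVec (Dv t) j.1
        rw [hDvsmul, WithLp.ofLp_smul, Matrix.mulVec_smul]; rfl } with hTdef
  have hfr : Module.finrank ℝ (↥J → ℝ) < Module.finrank ℝ (↥S → ℝ) := by
    rw [Module.finrank_fintype_fun_eq_card, Module.finrank_fintype_fun_eq_card]
    rw [← Nat.card_eq_fintype_card, ← Nat.card_eq_fintype_card]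
    rw [Nat.card_coe_set_eq, Nat.card_coe_set_eq]
    exact hlt
  have hnotinj : ¬ Function.Injective T := fun hinj =>
    absurd (LinearMap.finrank_le_finrank_of_injective hinj) (not_le.2 hfr)
  rw [Function.not_injective_iff] at hnotinj
  obtain ⟨t₁, t₂, hteq, htne⟩ := hnotinj
  set t := t₁ - t₂ with htdef
  have ht0 : T t = 0 := by rw [htdef, map_sub, hteq, sub_self]
  have htnz : t ≠ 0 := sub_ne_zero.2 htne
  set u := Dv t with hudef
  have hu : ∀ j ∈ J, A.mulVec u j = 0 := by
    intro j hj
    have := congrFun ht0 ⟨j, hj⟩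
    exact this
  have hune : u ≠ 0 := by
    obtain ⟨i₀, hi₀⟩ := Function.ne_iff.1 htnz
    have hvne' : v i₀.1 ≠ 0 := hvne i₀.1 i₀.2
    obtain ⟨j₀, hj₀⟩ := Function.ne_iff.1 hvne'
    intro h
    have hval : c t i₀.1 * v i₀.1 j₀ = 0 := congrArg (fun y : EuclideanSpace ℝ ((i : Fin n) × Fin (d i)) => y ⟨i₀.1, j₀⟩) h
    have hct : c t i₀.1 = t i₀ := by
      show (if h : i₀.1 ∈ S then t ⟨i₀.1, h⟩ else 0) = t i₀
      rw [dif_pos i₀.2]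
    rw [hct] at hval
    rcases mul_eq_zero.1 hval with h' | h'
    · exact hi₀ h'
    · exact hj₀ h'
  -- slack and smallness of δ
  have hev : ∀ᶠ δ in nhdsWithin (0:ℝ) (Set.Ioi 0),
      (∀ i, |δ * c t i| ≤ ε i) ∧ (∀ j, |δ * A.mulVec u j| ≤ b j - A.mulVec x j) := by
    have h1 : ∀ᶠ δ in nhdsWithin (0:ℝ) (Set.Ioi 0), ∀ i, |δ * c t i| ≤ ε i := by
      rw [Filter.eventually_all]
      intro i
      have htend : Filter.Tendsto (fun δ : ℝ => |δ * c t i|) (nhds 0) (nhds 0) := by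
        have : Filter.Tendsto (fun δ : ℝ => δ * c t i) (nhds 0) (nhds (0 * c t i)) :=
          (continuous_id.mul continuous_const).tendsto 0
        rw [zero_mul] at this
        simpa using this.abs
      have := htend.eventually_lt_const (hε i)
      exact (this.filter_mono nhdsWithin_le_nhds).mono fun δ h => h.le
    have h2 : ∀ᶠ δ in nhdsWithin (0:ℝ) (Set.Ioi 0),
        ∀ j, |δ * A.mulVec u j| ≤ b j - A.mulVec x j := by
      rw [Filter.eventually_all]
      intro j
      by_cases hj : j ∈ J
      · refine Filter.Eventually.of_forall fun δ => ?_
        have hjj : A.mulVec x j = b j := hj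
        rw [hu j hj, mul_zero, abs_zero, hjj, sub_self]
      · have hslack : 0 < b j - A.mulVec x j :=
          sub_pos.2 (lt_of_le_of_ne (hx1 j) (fun h => hj h))
        have htend : Filter.Tendsto (fun δ : ℝ => |δ * A.mulVec u j|) (nhds 0) (nhds 0) := by
          have : Filter.Tendsto (fun δ : ℝ => δ * A.mulVec u j) (nhds 0)
              (nhds (0 * A.mulVec u j)) := (continuous_id.mul continuous_const).tendsto 0
          rw [zero_mul] at this
          simpa using this.abs
        have := htend.eventually_lt_const hslack
        exact (this.filter_mono nhdsWithin_le_nhds).mono fun δ h => h.le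
    exact h1.and h2
  obtain ⟨δ, ⟨hδ1, hδ2⟩, hδpos⟩ := (hev.and self_mem_nhdsWithin).exists
  -- the two perturbed points are feasible
  have hfeas : ∀ σ : ℝ, |σ| = 1 →
      ((∀ j, A.mulVec (x + (σ * δ) • u) j ≤ b j) ∧
        ∀ i, (fun j => (x + (σ * δ) • u) ⟨i, j⟩) ∈ M i) := by
    intro σ hσ
    constructor
    · intro j
      have : A.mulVec (x + (σ * δ) • u) j = A.mulVec x j + (σ * δ) * A.mulVec u j := by
        rw [Matrix.mulVec_add, Matrix.mulVec_smul]
        simp [smul_eq_mul]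
      rw [this]
      have habs : (σ * δ) * A.mulVec u j ≤ |δ * A.mulVec u j| := by
        calc (σ * δ) * A.mulVec u j ≤ |(σ * δ) * A.mulVec u j| := le_abs_self _
        _ = |σ| * |δ * A.mulVec u j| := by rw [abs_mul, abs_mul, abs_mul, mul_assoc]
        _ = |δ * A.mulVec u j| := by rw [hσ, one_mul]
      have := hδ2 j
      linarith
    · intro i
      have hblock : (fun j => (x + (σ * δ) • u) ⟨i, j⟩)
          = (fun j => x ⟨i, j⟩) + ((σ * δ) * c t i) • v i := by
        funext j
        show x ⟨i, j⟩ + (σ * δ) * (c t i * v i j) = x ⟨i, j⟩ + ((σ * δ) * c t i) * v i j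
        ring
      rw [hblock]
      refine hvmem i _ ?_
      calc |(σ * δ) * c t i| = |σ| * |δ * c t i| := by
            rw [abs_mul, abs_mul, abs_mul, mul_assoc]
        _ = |δ * c t i| := by rw [hσ, one_mul]
        _ ≤ ε i := hδ1 i
  have hplus := hfeas 1 (by norm_num)
  have hminus := hfeas (-1) (by norm_num)
  -- minimality forces ⟪w, u⟫ = 0
  have hip : ⟪w, u⟫ = 0 := by
    have h1 := hxm (x + (1 * δ) • u) hplus
    have h2 := hxm (x + (-1 * δ) • u) hminus
    rw [inner_add_right, real_inner_smul_right] at h1 h2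
    have : (1 : ℝ) * δ > 0 := by linarith
    nlinarith [h1, h2]
  -- x + δ u is another minimizer
  have hymin : ∀ z : EuclideanSpace ℝ ((i : Fin n) × Fin (d i)),
      ((∀ j, A.mulVec z j ≤ b j) ∧ ∀ i, (fun j => z ⟨i, j⟩) ∈ M i) →
      ⟪w, x + (1 * δ) • u⟫ ≤ ⟪w, z⟫ := by
    intro z hz
    rw [inner_add_right, real_inner_smul_right, hip, mul_zero, add_zero]
    exact hxm z hz
  have := huniq _ hplus hymin
  have hu0 : (1 * δ) • u = 0 := by
    have h := congrArg (fun y => y - x) this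
    simpa [add_sub_cancel_left] using h
  rw [smul_eq_zero] at hu0
  rcases hu0 with h | h
  · rw [one_mul] at h; exact absurd h hδpos.ne'
  · exact hune h

end AuxSupport

/-- minimizing a uniformly random linear functional over
`{x : Ax ≤ b, xᵢ ∈ Mᵢ}` (with `Mᵢ` nonempty compact convex, feasible set nonempty)
almost surely gives a unique solution `x`, and the number of blocks `i` at which `xᵢ`
is not an extreme point of `Mᵢ` is at most the number `|J|` of active constraints at `x`. -/
theorem ae_unique_solution_extreme_blocks (n m : ℕ) (d : Fin n → ℕ)
    (M : ∀ i : Fin n, Set (Fin (d i) → ℝ))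
    (hMne : ∀ i, (M i).Nonempty) (hMcomp : ∀ i, IsCompact (M i))
    (hMconv : ∀ i, Convex ℝ (M i))
    (A : Matrix (Fin m) ((i : Fin n) × Fin (d i)) ℝ) (b : Fin m → ℝ)
    (hfeas : ∃ x : EuclideanSpace ℝ ((i : Fin n) × Fin (d i)),
      (∀ j, A.mulVec x j ≤ b j) ∧ ∀ i, (fun j => x ⟨i, j⟩) ∈ M i) :
    ∀ᵐ (w : sphere (0 : EuclideanSpace ℝ ((i : Fin n) × Fin (d i))) 1)
        ∂((volume : Measure (EuclideanSpace ℝ ((i : Fin n) × Fin (d i)))).toSphere),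
      ∃ x : EuclideanSpace ℝ ((i : Fin n) × Fin (d i)),
        ((∀ j, A.mulVec x j ≤ b j) ∧ ∀ i, (fun j => x ⟨i, j⟩) ∈ M i) ∧
        (∀ y ∈ {y : EuclideanSpace ℝ ((i : Fin n) × Fin (d i)) |
            (∀ j, A.mulVec y j ≤ b j) ∧ ∀ i, (fun j => y ⟨i, j⟩) ∈ M i},
          inner (𝕜 := ℝ) (w : EuclideanSpace ℝ ((i : Fin n) × Fin (d i))) x ≤
            inner (𝕜 := ℝ) (w : EuclideanSpace ℝ ((i : Fin n) × Fin (d i))) y) ∧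
        (∀ y ∈ {y : EuclideanSpace ℝ ((i : Fin n) × Fin (d i)) |
            (∀ j, A.mulVec y j ≤ b j) ∧ ∀ i, (fun j => y ⟨i, j⟩) ∈ M i},
          (∀ z ∈ {z : EuclideanSpace ℝ ((i : Fin n) × Fin (d i)) |
              (∀ j, A.mulVec z j ≤ b j) ∧ ∀ i, (fun j => z ⟨i, j⟩) ∈ M i},
            inner (𝕜 := ℝ) (w : EuclideanSpace ℝ ((i : Fin n) × Fin (d i))) y ≤
              inner (𝕜 := ℝ) (w : EuclideanSpace ℝ ((i : Fin n) × Fin (d i))) z) → y = x) ∧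
        {i : Fin n | (fun j => x ⟨i, j⟩) ∉ Set.extremePoints ℝ (M i)}.ncard ≤
          {j : Fin m | A.mulVec x j = b j}.ncard := by
  classical
  set K := {x : EuclideanSpace ℝ ((i : Fin n) × Fin (d i)) |
      (∀ j, A.mulVec x j ≤ b j) ∧ ∀ i, (fun j => x ⟨i, j⟩) ∈ M i} with hKdef
  have hKcomp : IsCompact K := K_compact n m d M hMcomp A b
  have hKne : K.Nonempty := hfeas
  obtain ⟨C, hlip⟩ := sfn_lipschitz hKcomp hKne
  have hae : ∀ᵐ w : EuclideanSpace ℝ ((i : Fin n) × Fin (d i)) ∂volume,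
      DifferentiableAt ℝ (sfn K) w := hlip.ae_differentiableAt
  have hD0 : volume {w : EuclideanSpace ℝ ((i : Fin n) × Fin (d i)) |
      ¬ DifferentiableAt ℝ (sfn K) w} = 0 := ae_iff.1 hae
  have hDm : MeasurableSet {w : EuclideanSpace ℝ ((i : Fin n) × Fin (d i)) |
      ¬ DifferentiableAt ℝ (sfn K) w} :=
    (measurableSet_of_differentiableAt ℝ (sfn K)).compl
  have hcone : ∀ r : ℝ, 0 < r → ∀ y ∈ {w : EuclideanSpace ℝ ((i : Fin n) × Fin (d i)) |
      ¬ DifferentiableAt ℝ (sfn K) w}, r • y ∈ {w : EuclideanSpace ℝ ((i : Fin n) × Fin (d i)) |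
      ¬ DifferentiableAt ℝ (sfn K) w} := by
    intro r hr y hy hdiff
    exact hy (by simpa [smul_smul, inv_mul_cancel₀ hr.ne', one_smul]
      using diff_smul hKne (inv_pos.2 hr) hdiff)
  have hnull := toSphere_null volume hDm hD0 hcone
  rw [MeasureTheory.ae_iff]
  refine measure_mono_null (fun w hw => ?_) hnull
  show ¬ DifferentiableAt ℝ (sfn K) (w : EuclideanSpace ℝ ((i : Fin n) × Fin (d i)))
  intro hdiff
  apply hw
  have hcont : Continuous (fun z : EuclideanSpace ℝ ((i : Fin n) × Fin (d i)) =>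
      ⟪(w : EuclideanSpace ℝ ((i : Fin n) × Fin (d i))), z⟫) :=
    continuous_const.inner continuous_id
  obtain ⟨x, hxK, hxmin⟩ := hKcomp.exists_isMinOn hKne hcont.continuousOn
  have hxm : ∀ z ∈ K, ⟪(w : EuclideanSpace ℝ ((i : Fin n) × Fin (d i))), x⟫ ≤
      ⟪(w : EuclideanSpace ℝ ((i : Fin n) × Fin (d i))), z⟫ :=
    fun z hz => isMinOn_iff.1 hxmin z hz
  refine ⟨x, hxK, fun y hy => hxm y hy, fun y hyK hymin => ?_, ?_⟩
  · exact unique_min hKcomp hdiff hyK hxK (fun z hz => hymin z hz) hxm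
  · exact count_lemma n m d M hMconv A b
      (w : EuclideanSpace ℝ ((i : Fin n) × Fin (d i))) x hxK.1 hxK.2
      (fun y hy => hxm y hy)
      (fun y hy hmin => unique_min hKcomp hdiff hy hxK (fun z hz => hmin z hz) hxm)
end

section
/- For the problem minimize Σᵢ₌₁ⁿ g(xᵢ) subject to Σᵢ xᵢ ≤ B with xᵢ ∈ [0,1], where g(x) = 1 for x < 1 and g(1) = 0, and 0 < B < 1: the optimal value of the original problem is p* = n, the optimal value of the convexified problem (with ĝ(x) = 1−x, constraints Σxᵢ ≤ B, 0 ≤ x ≤ 1) is p̂ = n − B, and hence p* − p̂ = B, which tends to the bound ρ(g)·(number of constraints) = 1 as B → 1. In particular the duality-gap bound p* ≤ p̂ + ρ(g) is tight. -/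
/-- for the problem `min Σ g(xᵢ) s.t. Σ xᵢ ≤ B, xᵢ ∈ [0,1]` with
`g = 1` on `[0,1)`, `g(1) = 0` and `0 < B < 1`: the optimal value is `p* = n`, the
convexified optimal value is `p̂ = n − B`, so `p* − p̂ = B`, and the bound
`p* ≤ p̂ + ρ(g) = p̂ + 1` is tight as `B → 1`. -/
theorem tight_example (n : ℕ) (hn : 0 < n) (B : ℝ) (hB0 : 0 < B) (hB1 : B < 1) :
    sInf {v : ℝ | ∃ x : Fin n → ℝ,
        ((∀ i, x i ∈ Set.Icc (0 : ℝ) 1) ∧ ∑ i, x i ≤ B) ∧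
        v = ∑ i, (if x i = 1 then (0 : ℝ) else 1)} = n ∧
    sInf {v : ℝ | ∃ x : Fin n → ℝ,
        ((∀ i, x i ∈ Set.Icc (0 : ℝ) 1) ∧ ∑ i, x i ≤ B) ∧
        v = ∑ i, (1 - x i)} = n - B ∧
    (n : ℝ) - (n - B) = B ∧ (n : ℝ) ≤ (n - B) + 1 := by
  refine ⟨?_, ?_, by ring, by linarith⟩
  · -- first set is the singleton {n}
    have hset : {v : ℝ | ∃ x : Fin n → ℝ,
        ((∀ i, x i ∈ Set.Icc (0 : ℝ) 1) ∧ ∑ i, x i ≤ B) ∧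
        v = ∑ i, (if x i = 1 then (0 : ℝ) else 1)} = {(n : ℝ)} := by
      ext v
      constructor
      · rintro ⟨x, ⟨hx, hsum⟩, rfl⟩
        have hne : ∀ i, x i ≠ 1 := by
          intro i hi
          have h1 : (1 : ℝ) ≤ ∑ j, x j := by
            calc (1 : ℝ) = x i := hi.symm
            _ ≤ ∑ j, x j := Finset.single_le_sum (fun j _ => (hx j).1) (Finset.mem_univ i)
          linarith
        simp only [Set.mem_singleton_iff]
        rw [Finset.sum_congr rfl (fun i _ => if_neg (hne i))]
        simp
      · rintro rfl
        exact ⟨fun _ => 0, ⟨fun i => ⟨le_refl 0, zero_le_one⟩, by simp; linarith⟩,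
          by simp⟩
    rw [hset, csInf_singleton]
  · -- second infimum
    apply le_antisymm
    · apply csInf_le
      · refine ⟨(n : ℝ) - B, ?_⟩
        rintro v ⟨x, ⟨hx, hsum⟩, rfl⟩
        have : ∑ i, (1 - x i) = n - ∑ i, x i := by
          rw [Finset.sum_sub_distrib]; simp
        rw [this]; linarith
      · refine ⟨fun _ => B / n, ⟨fun i => ⟨by positivity, ?_⟩, ?_⟩, ?_⟩
        · rw [div_le_one (by exact_mod_cast hn)]
          have : (1 : ℝ) ≤ n := by exact_mod_cast hn
          linarith
        · rw [Finset.sum_const]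
          simp
          have hn' : (n:ℝ) ≠ 0 := by exact_mod_cast hn.ne'
          field_simp
          exact le_refl _
        · rw [Finset.sum_sub_distrib, Finset.sum_const]
          simp
          have hn' : (n:ℝ) ≠ 0 := by exact_mod_cast hn.ne'
          field_simp
    · apply le_csInf
      · exact ⟨(n : ℝ) - B, fun _ => B / n, ⟨fun i => ⟨by positivity, by
          rw [div_le_one (by exact_mod_cast hn)]
          have : (1 : ℝ) ≤ n := by exact_mod_cast hn
          linarith⟩, by
          rw [Finset.sum_const]; simp
          have hn' : (n:ℝ) ≠ 0 := by exact_mod_cast hn.ne'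
          field_simp; exact le_refl _⟩, by
          rw [Finset.sum_sub_distrib, Finset.sum_const]; simp
          have hn' : (n:ℝ) ≠ 0 := by exact_mod_cast hn.ne'
          field_simp⟩
      · rintro v ⟨x, ⟨hx, hsum⟩, rfl⟩
        have : ∑ i, (1 - x i) = n - ∑ i, x i := by
          rw [Finset.sum_sub_distrib]; simp
        rw [this]; linarith
end

section
/- The convex envelope of f(x) = min(x₁,…,xₙ) on [0,1]ⁿ is f̂(x) = max(Σᵢ xᵢ − (n−1), 0), and ρ(f) = (n−1)/n. -/
lemma sum_two_supp {n : ℕ} (F : Fin n → ℝ) (j j' : Fin n) (h : j ≠ j')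
    (hF : ∀ i, i ≠ j → i ≠ j' → F i = 0) : ∑ i, F i = F j + F j' := by
  rw [← Finset.add_sum_erase _ F (Finset.mem_univ j),
    ← Finset.add_sum_erase _ F (Finset.mem_erase.mpr ⟨h.symm, Finset.mem_univ j'⟩),
    Finset.sum_eq_zero, add_zero]
  intro i hi
  simp only [Finset.mem_erase] at hi
  exact hF i hi.2.1 hi.1

lemma sum_almost_ones {n : ℕ} (x : Fin n → ℝ) (j : Fin n) (hone : ∀ i, i ≠ j → x i = 1) :
    ∑ i, x i = x j + ((n : ℝ) - 1) := by
  rw [← Finset.add_sum_erase _ x (Finset.mem_univ j)]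
  congr 1
  rw [Finset.sum_congr rfl (fun i hi => hone i (Finset.mem_erase.mp hi).1),
    Finset.sum_const, Finset.card_erase_of_mem (Finset.mem_univ j), Finset.card_univ,
    Fintype.card_fin, nsmul_eq_mul, mul_one, Nat.cast_sub (Fin.pos j), Nat.cast_one]

lemma claimA {n : ℕ} (h : (Fin n → ℝ) → ℝ)
    (hconv : ConvexOn ℝ (Set.Icc (0 : Fin n → ℝ) 1) h)
    (hle0 : ∀ y ∈ Set.Icc (0 : Fin n → ℝ) 1, (∃ i, y i = 0) → h y ≤ 0) :
    ∀ m : ℕ, ∀ x ∈ Set.Icc (0 : Fin n → ℝ) 1, ∑ i, x i = (n : ℝ) - 1 →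
      (Finset.univ.filter fun i => x i ≠ 1).card ≤ m → h x ≤ 0 := by
  intro m
  induction m with
  | zero =>
    intro x hx hsum hcard
    exfalso
    have hall : ∀ i, x i = 1 := by
      intro i
      by_contra hne
      have : i ∈ Finset.univ.filter fun i => x i ≠ 1 := by simp [hne]
      have := Finset.card_pos.mpr ⟨i, this⟩
      omega
    have : ∑ i, x i = (n : ℝ) := by
      rw [Finset.sum_congr rfl fun i _ => hall i]; simp
    rw [this] at hsum; linarith
  | succ m ih =>
    intro x hx hsum hcard
    by_cases hz : ∃ i, x i = 0
    · exact hle0 x hx hz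
    push_neg at hz
    have hxpos : ∀ i, 0 < x i := fun i => lt_of_le_of_ne (hx.1 i) (Ne.symm (hz i))
    have hxle : ∀ i, x i ≤ 1 := fun i => hx.2 i
    set F := Finset.univ.filter fun i => x i ≠ 1 with hFdef
    have hcard2 : 2 ≤ F.card := by
      by_contra hlt
      interval_cases hc : F.card
      · have hall : ∀ i, x i = 1 := by
          intro i
          by_contra hne
          have hiF : i ∈ F := by simp [hFdef, hne]
          rw [Finset.card_eq_zero] at hc
          simp [hc] at hiF
        have : ∑ i, x i = (n : ℝ) := by
          rw [Finset.sum_congr rfl fun i _ => hall i]; simp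
        rw [this] at hsum; linarith
      · obtain ⟨j, hj⟩ := Finset.card_eq_one.mp hc
        have hone : ∀ i, i ≠ j → x i = 1 := by
          intro i hij
          by_contra hne
          have hiF : i ∈ F := by simp [hFdef, hne]
          rw [hj, Finset.mem_singleton] at hiF
          exact hij hiF
        have := sum_almost_ones x j hone
        rw [hsum] at this
        have : x j = 0 := by linarith
        exact hz j this
    obtain ⟨j, hjF, j', hj'F, hjj'⟩ := Finset.one_lt_card.mp hcard2
    have hxj : x j < 1 := lt_of_le_of_ne (hxle j) (by simpa [hFdef] using hjF)
    have hxj' : x j' < 1 := lt_of_le_of_ne (hxle j') (by simpa [hFdef] using hj'F)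
    set a := min (x j) (1 - x j') with hadef
    set b := min (x j') (1 - x j) with hbdef
    have ha : 0 < a := lt_min (hxpos j) (by linarith)
    have hb : 0 < b := lt_min (hxpos j') (by linarith)
    set p : Fin n → ℝ := fun i => if i = j then x j - a else if i = j' then x j' + a else x i
      with hpdef
    set q : Fin n → ℝ := fun i => if i = j then x j + b else if i = j' then x j' - b else x i
      with hqdef
    have hpj : p j = x j - a := by simp [hpdef]
    have hpj' : p j' = x j' + a := by simp [hpdef, hjj'.symm]
    have hqj : q j = x j + b := by simp [hqdef]
    have hqj' : q j' = x j' - b := by simp [hqdef, hjj'.symm]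
    have hamin1 : a ≤ x j := min_le_left _ _
    have hamin2 : a ≤ 1 - x j' := min_le_right _ _
    have hbmin1 : b ≤ x j' := min_le_left _ _
    have hbmin2 : b ≤ 1 - x j := min_le_right _ _
    have hpmem : p ∈ Set.Icc (0 : Fin n → ℝ) 1 := by
      constructor <;> intro i <;> simp only [hpdef, Pi.zero_apply, Pi.one_apply] <;>
        split_ifs <;> first | linarith | exact hx.1 i | exact hxle i
    have hqmem : q ∈ Set.Icc (0 : Fin n → ℝ) 1 := by
      constructor <;> intro i <;> simp only [hqdef, Pi.zero_apply, Pi.one_apply] <;>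
        split_ifs <;> first | linarith | exact hx.1 i | exact hxle i
    have hpsum : ∑ i, p i = (n : ℝ) - 1 := by
      have hd : ∑ i, (p i - x i) = (p j - x j) + (p j' - x j') :=
        sum_two_supp _ j j' hjj' (by
          intro i hij hij'
          simp [hpdef, hij, hij'])
      rw [Finset.sum_sub_distrib, hsum, hpj, hpj'] at hd
      linarith
    have hqsum : ∑ i, q i = (n : ℝ) - 1 := by
      have hd : ∑ i, (q i - x i) = (q j - x j) + (q j' - x j') :=
        sum_two_supp _ j j' hjj' (by
          intro i hij hij'
          simp [hqdef, hij, hij'])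
      rw [Finset.sum_sub_distrib, hsum, hqj, hqj'] at hd
      linarith
    have hab : 0 < a + b := by linarith
    have hcomb : x = (b / (a + b)) • p + (a / (a + b)) • q := by
      funext i
      simp only [Pi.add_apply, Pi.smul_apply, smul_eq_mul, hpdef, hqdef]
      split_ifs with h1 h2
      · subst h1; field_simp; ring
      · subst h2; field_simp; ring
      · field_simp; ring
    have hhp : h p ≤ 0 := by
      rcases min_cases (x j) (1 - x j') with ⟨haeq, _⟩ | ⟨haeq, _⟩
      · exact hle0 p hpmem ⟨j, by rw [hpj, hadef, haeq]; ring⟩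
      · have hpj'1 : p j' = 1 := by rw [hpj', hadef, haeq]; ring
        apply ih p hpmem hpsum
        have hsub : (Finset.univ.filter fun i => p i ≠ 1) ⊆ F.erase j' := by
          intro i hi
          simp only [Finset.mem_filter, Finset.mem_univ, true_and] at hi
          rw [Finset.mem_erase]
          refine ⟨fun hc => hi (hc ▸ hpj'1), ?_⟩
          simp only [hFdef, Finset.mem_filter, Finset.mem_univ, true_and]
          intro hxi1
          apply hi
          by_cases hij : i = j
          · exact absurd (hij ▸ hxi1) hxj.ne
          · by_cases hij' : i = j'
            · exact hij' ▸ hpj'1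
            · simp [hpdef, hij, hij', hxi1]
        calc (Finset.univ.filter fun i => p i ≠ 1).card ≤ (F.erase j').card :=
              Finset.card_le_card hsub
          _ = F.card - 1 := Finset.card_erase_of_mem hj'F
          _ ≤ m := by omega
    have hhq : h q ≤ 0 := by
      rcases min_cases (x j') (1 - x j) with ⟨hbeq, _⟩ | ⟨hbeq, _⟩
      · exact hle0 q hqmem ⟨j', by rw [hqj', hbdef, hbeq]; ring⟩
      · have hqj1 : q j = 1 := by rw [hqj, hbdef, hbeq]; ring
        apply ih q hqmem hqsum
        have hsub : (Finset.univ.filter fun i => q i ≠ 1) ⊆ F.erase j := by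
          intro i hi
          simp only [Finset.mem_filter, Finset.mem_univ, true_and] at hi
          rw [Finset.mem_erase]
          refine ⟨fun hc => hi (hc ▸ hqj1), ?_⟩
          simp only [hFdef, Finset.mem_filter, Finset.mem_univ, true_and]
          intro hxi1
          apply hi
          by_cases hij : i = j
          · exact hij ▸ hqj1
          · by_cases hij' : i = j'
            · exact absurd (hij' ▸ hxi1) hxj'.ne
            · simp [hqdef, hij, hij', hxi1]
        calc (Finset.univ.filter fun i => q i ≠ 1).card ≤ (F.erase j).card :=
              Finset.card_le_card hsub
          _ = F.card - 1 := Finset.card_erase_of_mem hjF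
          _ ≤ m := by omega
    have hkey := hconv.2 hpmem hqmem (by positivity : (0:ℝ) ≤ b / (a + b))
      (by positivity : (0:ℝ) ≤ a / (a + b)) (by rw [← add_div, add_comm b a, div_self hab.ne'])
    rw [← hcomb] at hkey
    simp only [smul_eq_mul] at hkey
    have h1 : 0 ≤ b / (a + b) := by positivity
    have h2 : 0 ≤ a / (a + b) := by positivity
    have t1 : b / (a + b) * h p ≤ 0 := mul_nonpos_of_nonneg_of_nonpos h1 hhp
    have t2 : a / (a + b) * h q ≤ 0 := mul_nonpos_of_nonneg_of_nonpos h2 hhq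
    linarith


lemma claimB {n : ℕ} (h : (Fin n → ℝ) → ℝ)
    (hconv : ConvexOn ℝ (Set.Icc (0 : Fin n → ℝ) 1) h)
    (hle0 : ∀ y ∈ Set.Icc (0 : Fin n → ℝ) 1, (∃ i, y i = 0) → h y ≤ 0) :
    ∀ m : ℕ, ∀ x ∈ Set.Icc (0 : Fin n → ℝ) 1, ∑ i, x i ≤ (n : ℝ) - 1 →
      (Finset.univ.filter fun i => x i ≠ 1).card ≤ m → h x ≤ 0 := by
  have hA := claimA h hconv hle0
  intro m
  induction m with
  | zero =>
    intro x hx hsum hcard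
    exfalso
    have hall : ∀ i, x i = 1 := by
      intro i
      by_contra hne
      have : i ∈ Finset.univ.filter fun i => x i ≠ 1 := by simp [hne]
      have := Finset.card_pos.mpr ⟨i, this⟩
      omega
    have : ∑ i, x i = (n : ℝ) := by
      rw [Finset.sum_congr rfl fun i _ => hall i]; simp
    rw [this] at hsum; linarith
  | succ m ih =>
    intro x hx hsum hcard
    rcases eq_or_lt_of_le hsum with heq | hlt
    · exact hA n x hx heq ((Finset.card_filter_le _ _).trans (by simp))
    by_cases hz : ∃ i, x i = 0
    · exact hle0 x hx hz
    push_neg at hz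
    have hxpos : ∀ i, 0 < x i := fun i => lt_of_le_of_ne (hx.1 i) (Ne.symm (hz i))
    have hxle : ∀ i, x i ≤ 1 := fun i => hx.2 i
    set F := Finset.univ.filter fun i => x i ≠ 1 with hFdef
    have hFne : F.Nonempty := by
      rw [Finset.filter_nonempty_iff]
      by_contra hc
      push_neg at hc
      have : ∑ i, x i = (n : ℝ) := by
        rw [Finset.sum_congr rfl fun i hi => hc i hi]; simp
      rw [this] at hlt; linarith
    set k := F.card with hkdef
    have hk : 0 < k := Finset.card_pos.mpr hFne
    obtain ⟨i0, hi0F, hi0min⟩ := Finset.exists_min_image F x hFne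
    obtain ⟨i1, hi1F, hi1min⟩ := Finset.exists_min_image F (fun i => 1 - x i) hFne
    set s := x i0 with hsdef
    have hs : 0 < s := hxpos i0
    have hxi1 : x i1 < 1 := lt_of_le_of_ne (hxle i1) (by simpa [hFdef] using hi1F)
    set r := ((n : ℝ) - 1 - ∑ i, x i) / k with hrdef
    have hr : 0 < r := div_pos (by linarith) (by exact_mod_cast hk)
    set t := min r (1 - x i1) with htdef
    have ht : 0 < t := lt_min hr (by linarith)
    set p : Fin n → ℝ := fun i => if x i = 1 then 1 else x i - s with hpdef
    set z : Fin n → ℝ := fun i => if x i = 1 then 1 else x i + t with hzdef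
    have hmemF : ∀ i, x i ≠ 1 → i ∈ F := by intro i hi; simp [hFdef, hi]
    have hpmem : p ∈ Set.Icc (0 : Fin n → ℝ) 1 := by
      constructor <;> intro i <;> simp only [hpdef, Pi.zero_apply, Pi.one_apply] <;>
        split_ifs with hi
      · exact zero_le_one
      · have := hi0min i (hmemF i hi); linarith [hxpos i]
      · exact le_refl 1
      · linarith [hxle i, hs]
    have htle : ∀ i, x i ≠ 1 → t ≤ 1 - x i := by
      intro i hi
      have := hi1min i (hmemF i hi)
      calc t ≤ 1 - x i1 := min_le_right _ _
        _ ≤ 1 - x i := this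
    have hzmem : z ∈ Set.Icc (0 : Fin n → ℝ) 1 := by
      constructor <;> intro i <;> simp only [hzdef, Pi.zero_apply, Pi.one_apply] <;>
        split_ifs with hi
      · exact zero_le_one
      · linarith [hxpos i]
      · exact le_refl 1
      · linarith [htle i hi]
    have hst : 0 < s + t := by linarith
    have hcomb : x = (t / (s + t)) • p + (s / (s + t)) • z := by
      funext i
      simp only [Pi.add_apply, Pi.smul_apply, smul_eq_mul, hpdef, hzdef]
      split_ifs with hi
      · rw [hi]; field_simp; ring
      · field_simp; ring
    have hhp : h p ≤ 0 := by
      apply hle0 p hpmem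
      refine ⟨i0, ?_⟩
      have : x i0 ≠ 1 := by simpa [hFdef] using hi0F
      simp [hpdef, this, hsdef]
    have hzsum : ∑ i, z i = ∑ i, x i + k * t := by
      have hd : ∑ i, (z i - x i) = ∑ i ∈ F, (z i - x i) := by
        refine (Finset.sum_subset (Finset.subset_univ F) ?_).symm
        intro i _ hiF
        have : x i = 1 := by
          by_contra hne
          exact hiF (hmemF i hne)
        simp [hzdef, this]
      have hd2 : ∑ i ∈ F, (z i - x i) = k * t := by
        rw [Finset.sum_congr rfl (g := fun _ => t) ?_, Finset.sum_const, nsmul_eq_mul]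
        intro i hiF
        have : x i ≠ 1 := by simpa [hFdef] using hiF
        simp [hzdef, this]
      rw [Finset.sum_sub_distrib] at hd
      rw [hd2] at hd
      linarith
    have hhz : h z ≤ 0 := by
      rcases min_cases r (1 - x i1) with ⟨hteq, _⟩ | ⟨hteq, _⟩
      · -- t = r : sum reaches n - 1
        apply hA n z hzmem ?_ ((Finset.card_filter_le _ _).trans (by simp))
        rw [hzsum, htdef, hteq, hrdef]
        field_simp
        ring
      · -- t = 1 - x i1 : one more coordinate reaches 1
        have hzi1 : z i1 = 1 := by
          have hne : x i1 ≠ 1 := hxi1.ne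
          simp only [hzdef, hne, if_false, htdef, hteq]
          ring
        apply ih z hzmem
        · rw [hzsum]
          have : (k : ℝ) * t ≤ (k : ℝ) * r :=
            mul_le_mul_of_nonneg_left (min_le_left _ _) (Nat.cast_nonneg _)
          have hkr : (k : ℝ) * r = (n : ℝ) - 1 - ∑ i, x i := by
            rw [hrdef]; field_simp
          linarith
        · have hsub : (Finset.univ.filter fun i => z i ≠ 1) ⊆ F.erase i1 := by
            intro i hi
            simp only [Finset.mem_filter, Finset.mem_univ, true_and] at hi
            rw [Finset.mem_erase]
            refine ⟨fun hc => hi (hc ▸ hzi1), hmemF i fun hxi => hi (by simp [hzdef, hxi])⟩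
          calc (Finset.univ.filter fun i => z i ≠ 1).card ≤ (F.erase i1).card :=
                Finset.card_le_card hsub
            _ = F.card - 1 := Finset.card_erase_of_mem hi1F
            _ ≤ m := by omega
    have hkey := hconv.2 hpmem hzmem (div_nonneg ht.le hst.le : (0:ℝ) ≤ t / (s + t))
      (div_nonneg hs.le hst.le : (0:ℝ) ≤ s / (s + t))
      (by rw [← add_div, add_comm t s, div_self hst.ne'])
    rw [← hcomb] at hkey
    simp only [smul_eq_mul] at hkey
    have h1 : 0 ≤ t / (s + t) := div_nonneg ht.le hst.le
    have h2 : 0 ≤ s / (s + t) := div_nonneg hs.le hst.le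
    have t1 : t / (s + t) * h p ≤ 0 := mul_nonpos_of_nonneg_of_nonpos h1 hhp
    have t2 : s / (s + t) * h z ≤ 0 := mul_nonpos_of_nonneg_of_nonpos h2 hhz
    linarith


lemma sum_erase_le' {n : ℕ} (x : Fin n → ℝ) (hx : x ∈ Set.Icc (0 : Fin n → ℝ) 1)
    (i : Fin n) : ∑ j, x j - x i ≤ (n : ℝ) - 1 := by
  rw [← Finset.sum_erase_eq_sub (Finset.mem_univ i)]
  calc ∑ j ∈ Finset.univ.erase i, x j ≤ ∑ j ∈ Finset.univ.erase i, (1:ℝ) :=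
        Finset.sum_le_sum fun j _ => hx.2 j
    _ = ((n - 1 : ℕ) : ℝ) := by
        rw [Finset.sum_const, Finset.card_erase_of_mem (Finset.mem_univ i),
          Finset.card_univ, Fintype.card_fin, nsmul_eq_mul, mul_one]
    _ = (n : ℝ) - 1 := by rw [Nat.cast_sub (Fin.pos i), Nat.cast_one]

lemma claimMain {n : ℕ} (hn : 0 < n) (h : (Fin n → ℝ) → ℝ)
    (hconv : ConvexOn ℝ (Set.Icc (0 : Fin n → ℝ) 1) h)
    (hlef : ∀ x ∈ Set.Icc (0 : Fin n → ℝ) 1, h x ≤ ⨅ i, x i) :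
    ∀ x ∈ Set.Icc (0 : Fin n → ℝ) 1, h x ≤ max (∑ i, x i - ((n : ℝ) - 1)) 0 := by
  haveI : Nonempty (Fin n) := ⟨⟨0, hn⟩⟩
  have hle0 : ∀ y ∈ Set.Icc (0 : Fin n → ℝ) 1, (∃ i, y i = 0) → h y ≤ 0 := by
    rintro y hy ⟨i, hi⟩
    calc h y ≤ ⨅ i, y i := hlef y hy
      _ ≤ y i := ciInf_le (Finite.bddBelow_range _) i
      _ = 0 := hi
  have hB : ∀ x ∈ Set.Icc (0 : Fin n → ℝ) 1, ∑ i, x i ≤ (n : ℝ) - 1 → h x ≤ 0 := by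
    intro x hx hs
    exact claimB h hconv hle0 n x hx hs ((Finset.card_filter_le _ _).trans (by simp))
  intro x hx
  rcases le_or_gt (∑ i, x i) ((n : ℝ) - 1) with hle | hgt
  · exact (hB x hx hle).trans (le_max_right _ _)
  have hSn : ∑ i, x i ≤ (n : ℝ) := by
    calc ∑ i, x i ≤ ∑ _i : Fin n, (1:ℝ) := Finset.sum_le_sum fun i _ => hx.2 i
      _ = n := by simp
  have h1mem : (1 : Fin n → ℝ) ∈ Set.Icc (0 : Fin n → ℝ) 1 := ⟨zero_le_one, le_refl _⟩
  have hinf1 : (⨅ i, (1 : Fin n → ℝ) i) = 1 := by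
    simp only [Pi.one_apply]; exact ciInf_const
  have hh1 : h 1 ≤ 1 := by
    calc h 1 ≤ ⨅ i, (1 : Fin n → ℝ) i := hlef 1 h1mem
      _ = 1 := hinf1
  rcases eq_or_lt_of_le hSn with hSeq | hSlt
  · -- x = 1
    have hx1 : x = 1 := by
      funext i
      by_contra hne
      have hlt : x i < 1 := lt_of_le_of_ne (hx.2 i) hne
      have : ∑ j, x j < ∑ _j : Fin n, (1:ℝ) := by
        apply Finset.sum_lt_sum (fun j _ => hx.2 j) ⟨i, Finset.mem_univ i, hlt⟩
      simp only [Finset.sum_const, Finset.card_univ, Fintype.card_fin, nsmul_eq_mul,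
        mul_one] at this
      rw [hSeq] at this
      exact lt_irrefl _ this
    rw [hx1]
    have hs1 : ∑ i, (1 : Fin n → ℝ) i = (n : ℝ) := by simp
    rw [hs1]
    have : (n : ℝ) - ((n : ℝ) - 1) = 1 := by ring
    rw [this, max_eq_left zero_le_one]
    exact hh1
  · -- n - 1 < S < n
    set S := ∑ i, x i with hSdef
    set t0 := S - ((n : ℝ) - 1) with ht0def
    have ht0 : 0 < t0 := by rw [ht0def]; linarith
    have ht01 : t0 < 1 := by rw [ht0def]; linarith
    have h1t : 0 < 1 - t0 := by linarith
    set y : Fin n → ℝ := fun i => (x i - t0) / (1 - t0) with hydef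
    have hymem : y ∈ Set.Icc (0 : Fin n → ℝ) 1 := by
      constructor <;> intro i <;> simp only [hydef, Pi.zero_apply, Pi.one_apply]
      · apply div_nonneg _ h1t.le
        have := sum_erase_le' x hx i
        rw [ht0def, hSdef]
        linarith
      · rw [div_le_one h1t]
        have h1i : x i ≤ 1 := hx.2 i
        linarith
    have hysum : ∑ i, y i = (n : ℝ) - 1 := by
      have h1 : ∑ i, y i = (S - n * t0) / (1 - t0) := by
        rw [hydef, ← Finset.sum_div]
        congr 1
        rw [Finset.sum_sub_distrib, Finset.sum_const, Finset.card_univ, Fintype.card_fin,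
          nsmul_eq_mul, hSdef]
      rw [h1, div_eq_iff h1t.ne', ht0def]
      ring
    have hy0 : h y ≤ 0 := hB y hymem hysum.le
    have hcomb : x = t0 • (1 : Fin n → ℝ) + (1 - t0) • y := by
      funext i
      simp only [Pi.add_apply, Pi.smul_apply, Pi.one_apply, smul_eq_mul, hydef]
      field_simp
      ring
    have hkey := hconv.2 h1mem hymem ht0.le h1t.le (by ring)
    rw [← hcomb] at hkey
    simp only [smul_eq_mul] at hkey
    have hmax : max (S - ((n : ℝ) - 1)) 0 = t0 := max_eq_left ht0.le
    rw [hmax]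
    have t1 : (1 - t0) * h y ≤ 0 := mul_nonpos_of_nonneg_of_nonpos h1t.le hy0
    have t2 : t0 * h 1 ≤ t0 * 1 := mul_le_mul_of_nonneg_left hh1 ht0.le
    linarith


section easy
variable (n : ℕ)

lemma gconv : ConvexOn ℝ (Set.Icc (0 : Fin n → ℝ) 1)
    (fun x => max (∑ i, x i - ((n : ℝ) - 1)) 0) := by
  have haff : ConvexOn ℝ (Set.Icc (0 : Fin n → ℝ) 1) (fun x => ∑ i, x i - ((n : ℝ) - 1)) := by
    refine ⟨convex_Icc _ _, ?_⟩
    intro a _ b _ u v hu hv huv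
    apply le_of_eq
    simp only [Pi.add_apply, Pi.smul_apply, smul_eq_mul]
    rw [Finset.sum_add_distrib, ← Finset.mul_sum, ← Finset.mul_sum]
    linear_combination ((n:ℝ) - 1) * huv
  have hc := haff.sup (convexOn_const (0:ℝ) (convex_Icc _ _))
  exact hc

lemma glsc : LowerSemicontinuousOn (fun x : Fin n → ℝ => max (∑ i, x i - ((n : ℝ) - 1)) 0)
    (Set.Icc (0 : Fin n → ℝ) 1) := by
  have : Continuous (fun x : Fin n → ℝ => max (∑ i, x i - ((n : ℝ) - 1)) 0) := by fun_prop
  exact this.lowerSemicontinuous.lowerSemicontinuousOn _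

lemma gle (hn : 0 < n) (x : Fin n → ℝ) (hx : x ∈ Set.Icc (0 : Fin n → ℝ) 1) :
    max (∑ i, x i - ((n : ℝ) - 1)) 0 ≤ ⨅ i, x i := by
  haveI : Nonempty (Fin n) := ⟨⟨0, hn⟩⟩
  refine le_ciInf fun i => max_le ?_ (hx.1 i)
  linarith [sum_erase_le' x hx i, (hx.1 i : (0:ℝ) ≤ x i)]

lemma rho_eq (hn : 0 < n) : sSup ((fun x : Fin n → ℝ => (⨅ i, x i) - max (∑ i, x i - ((n:ℝ) - 1)) 0) ''
    Set.Icc (0 : Fin n → ℝ) 1) = ((n:ℝ) - 1) / n := by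
  haveI : Nonempty (Fin n) := ⟨⟨0, hn⟩⟩
  have hn' : (0:ℝ) < n := by exact_mod_cast hn
  set c : ℝ := ((n:ℝ) - 1) / n with hcdef
  have hc0 : 0 ≤ c := div_nonneg (by simp; exact_mod_cast hn) hn'.le
  have hc1 : c ≤ 1 := by rw [div_le_one hn']; linarith
  have hub : ∀ v ∈ ((fun x : Fin n → ℝ => (⨅ i, x i) - max (∑ i, x i - ((n:ℝ) - 1)) 0) ''
      Set.Icc (0 : Fin n → ℝ) 1), v ≤ c := by
    rintro v ⟨x, hx, rfl⟩
    dsimp only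
    set m := ⨅ i, x i with hmdef
    have hm0 : 0 ≤ m := le_ciInf fun i => hx.1 i
    have hmle : ∀ i, m ≤ x i := fun i => ciInf_le (Finite.bddBelow_range _) i
    have hsm : (n:ℝ) * m ≤ ∑ i, x i := by
      calc (n:ℝ) * m = ∑ _i : Fin n, m := by
            rw [Finset.sum_const, Finset.card_univ, Fintype.card_fin, nsmul_eq_mul]
        _ ≤ ∑ i, x i := Finset.sum_le_sum fun i _ => hmle i
    have hmax0 : (0:ℝ) ≤ max (∑ i, x i - ((n:ℝ) - 1)) 0 := le_max_right _ _
    have hmax1 : ∑ i, x i - ((n:ℝ) - 1) ≤ max (∑ i, x i - ((n:ℝ) - 1)) 0 := le_max_left _ _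
    rcases le_or_gt m c with hmc | hmc
    · linarith
    · have hm1 : m ≤ 1 := (hmle ⟨0, hn⟩).trans (hx.2 ⟨0, hn⟩)
      have : m - max (∑ i, x i - ((n:ℝ) - 1)) 0 ≤ m - ((n:ℝ) * m - ((n:ℝ) - 1)) := by
        linarith
      have h2 : m - ((n:ℝ) * m - ((n:ℝ) - 1)) = ((n:ℝ) - 1) * (1 - m) := by ring
      have h3 : ((n:ℝ) - 1) * (1 - m) ≤ ((n:ℝ) - 1) * (1 - c) := by
        apply mul_le_mul_of_nonneg_left (by linarith) (by simp; exact_mod_cast hn)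
      have h4 : ((n:ℝ) - 1) * (1 - c) = c := by
        rw [hcdef]; field_simp; ring
      linarith
  apply le_antisymm
  · exact csSup_le (⟨_, ⟨0, ⟨le_refl _, zero_le_one⟩, rfl⟩⟩) hub
  · apply le_csSup ⟨c, hub⟩
    refine ⟨fun _ => c, ⟨fun i => hc0, fun i => hc1⟩, ?_⟩
    have h1 : (⨅ _i : Fin n, c) = c := ciInf_const
    have h2 : ∑ _i : Fin n, c = (n:ℝ) - 1 := by
      rw [Finset.sum_const, Finset.card_univ, Fintype.card_fin, nsmul_eq_mul, hcdef]
      field_simp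
    simp only [h1, h2]
    simp

end easy

/-- the convex envelope of `min(x₁,…,xₙ)` on `[0,1]ⁿ` is
`max(Σ xᵢ − (n−1), 0)`, with nonconvexity `(n−1)/n`. -/
theorem envelope_min_n (n : ℕ) (hn : 0 < n) :
    IsConvexEnvelopeOn (Set.Icc (0 : Fin n → ℝ) 1)
      (fun x => ⨅ i, x i) (fun x => max (∑ i, x i - (n - 1)) 0) ∧
    sSup ((fun x : Fin n → ℝ => (⨅ i, x i) - max (∑ i, x i - (n - 1)) 0) ''
      Set.Icc (0 : Fin n → ℝ) 1) = (n - 1) / n := by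
  have hC : convexHull ℝ (Set.Icc (0 : Fin n → ℝ) 1) = Set.Icc 0 1 :=
    (convex_Icc _ _).convexHull_eq
  constructor
  · unfold IsConvexEnvelopeOn
    rw [hC]
    refine ⟨gconv n, glsc n, fun x hx => gle n hn x hx, ?_⟩
    intro h hconv _ hle x hx
    exact claimMain hn h hconv hle x hx
  · exact rho_eq n hn
end

section
/- The convex envelope of f(x) = ∏ᵢ₌₁ⁿ xᵢ on [0,1]ⁿ is f̂(x) = max(Σᵢ xᵢ − (n−1), 0), and ρ(f) = ((n−1)/n)ⁿ. -/
open Finset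

lemma hull_eq (n : ℕ) : convexHull ℝ (Set.Icc (0 : Fin n → ℝ) 1) = Set.Icc 0 1 :=
  (convex_Icc _ _).convexHull_eq

lemma mem_cube_iff {n : ℕ} {x : Fin n → ℝ} :
    x ∈ Set.Icc (0 : Fin n → ℝ) 1 ↔ ∀ i, 0 ≤ x i ∧ x i ≤ 1 := by
  simp [Set.mem_Icc, Pi.le_def, forall_and]

lemma sum_sub_le_prod {n : ℕ} (s : Finset (Fin n)) (x : Fin n → ℝ)
    (hx : ∀ i, 0 ≤ x i ∧ x i ≤ 1) :
    ∑ i ∈ s, x i - (s.card - 1) ≤ ∏ i ∈ s, x i := by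
  classical
  induction s using Finset.induction with
  | empty => simp
  | @insert a s ha ih =>
    rw [Finset.sum_insert ha, Finset.prod_insert ha, Finset.card_insert_of_notMem ha]
    push_cast
    have h1 : ∏ i ∈ s, x i ≤ 1 := Finset.prod_le_one (fun i _ => (hx i).1) (fun i _ => (hx i).2)
    have h0 : (0:ℝ) ≤ ∏ i ∈ s, x i := Finset.prod_nonneg (fun i _ => (hx i).1)
    nlinarith [(hx a).1, (hx a).2, ih]

lemma key_le_zero {n : ℕ} (h : (Fin n → ℝ) → ℝ)
    (hcvx : ConvexOn ℝ (Set.Icc (0:Fin n→ℝ) 1) h)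
    (hle : ∀ x ∈ Set.Icc (0:Fin n→ℝ) 1, h x ≤ ∏ i, x i) :
    ∀ x ∈ Set.Icc (0:Fin n→ℝ) 1, ∑ i, x i ≤ n - 1 → h x ≤ 0 := by
  classical
  suffices H : ∀ m : ℕ, ∀ x ∈ Set.Icc (0:Fin n→ℝ) 1,
      (univ.filter fun i => x i ≠ 0 ∧ x i ≠ 1).card ≤ m → ∑ i, x i ≤ (n:ℝ) - 1 → h x ≤ 0 by
    intro x hx hs; exact H _ x hx le_rfl hs
  intro m
  induction m with
  | zero =>
    intro x hx hcard hs
    have hall : ∀ i, x i = 0 ∨ x i = 1 := by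
      intro i
      by_contra hi
      push_neg at hi
      have hmem : i ∈ univ.filter fun i => x i ≠ 0 ∧ x i ≠ 1 := by simp [hi.1, hi.2]
      have := Finset.card_pos.mpr ⟨i, hmem⟩
      omega
    have hzero : ∃ i, x i = 0 := by
      by_contra hno
      push_neg at hno
      have h1 : ∀ i, x i = 1 := fun i => (hall i).resolve_left (hno i)
      have hsum : ∑ i, x i = (n:ℝ) := by
        simp [h1]
      rw [hsum] at hs
      linarith
    obtain ⟨i, hi⟩ := hzero
    calc h x ≤ ∏ j, x j := hle x hx
    _ = 0 := Finset.prod_eq_zero (mem_univ i) hi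
  | succ m ih =>
    intro x hx hcard hs
    by_cases hm : (univ.filter fun i => x i ≠ 0 ∧ x i ≠ 1).card ≤ m
    · exact ih x hx hm hs
    have hc : (univ.filter fun i => x i ≠ 0 ∧ x i ≠ 1).card = m + 1 := le_antisymm hcard (by omega)
    have hne : (univ.filter fun i => x i ≠ 0 ∧ x i ≠ 1).Nonempty := by
      rw [← Finset.card_pos, hc]; omega
    obtain ⟨i, hi⟩ := hne
    rw [Finset.mem_filter] at hi
    have hxi : 0 < x i ∧ x i < 1 :=
      ⟨lt_of_le_of_ne ((mem_cube_iff.1 hx) i).1 (Ne.symm hi.2.1),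
       lt_of_le_of_ne ((mem_cube_iff.1 hx) i).2 hi.2.2⟩
    by_cases hj : ∃ j ∈ univ.filter fun k => x k ≠ 0 ∧ x k ≠ 1, j ≠ i
    · -- two fractional coordinates
      obtain ⟨j, hjmem, hji⟩ := hj
      rw [Finset.mem_filter] at hjmem
      have hxj : 0 < x j ∧ x j < 1 :=
        ⟨lt_of_le_of_ne ((mem_cube_iff.1 hx) j).1 (Ne.symm hjmem.2.1),
         lt_of_le_of_ne ((mem_cube_iff.1 hx) j).2 hjmem.2.2⟩
      set a := min (x i) (1 - x j) with ha_def
      set b := min (1 - x i) (x j) with hb_def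
      have ha : 0 < a := lt_min hxi.1 (by linarith [hxj.2])
      have hb : 0 < b := lt_min (by linarith [hxi.2]) hxj.1
      set p : Fin n → ℝ := Function.update (Function.update x i (x i - a)) j (x j + a) with hp_def
      set q : Fin n → ℝ := Function.update (Function.update x i (x i + b)) j (x j - b) with hq_def
      have hpi : p i = x i - a := by
        rw [hp_def, Function.update_of_ne hji.symm, Function.update_self]
      have hpj : p j = x j + a := by rw [hp_def, Function.update_self]
      have hpk : ∀ k, k ≠ i → k ≠ j → p k = x k := by
        intro k hki hkj
        rw [hp_def, Function.update_of_ne hkj, Function.update_of_ne hki]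
      have hqi : q i = x i + b := by
        rw [hq_def, Function.update_of_ne hji.symm, Function.update_self]
      have hqj : q j = x j - b := by rw [hq_def, Function.update_self]
      have hqk : ∀ k, k ≠ i → k ≠ j → q k = x k := by
        intro k hki hkj
        rw [hq_def, Function.update_of_ne hkj, Function.update_of_ne hki]
      have hpmem : p ∈ Set.Icc (0:Fin n→ℝ) 1 := by
        rw [mem_cube_iff]; intro k
        rcases eq_or_ne k i with rfl | hki
        · rw [hpi]
          constructor
          · have : a ≤ x k := min_le_left _ _
            linarith
          · linarith [hxi.2, ha]
        rcases eq_or_ne k j with rfl | hkj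
        · rw [hpj]
          constructor
          · linarith [hxj.1, ha]
          · have : a ≤ 1 - x k := min_le_right _ _
            linarith
        · rw [hpk k hki hkj]; exact mem_cube_iff.1 hx k
      have hqmem : q ∈ Set.Icc (0:Fin n→ℝ) 1 := by
        rw [mem_cube_iff]; intro k
        rcases eq_or_ne k i with rfl | hki
        · rw [hqi]
          constructor
          · linarith [hxi.1, hb]
          · have : b ≤ 1 - x k := min_le_left _ _
            linarith
        rcases eq_or_ne k j with rfl | hkj
        · rw [hqj]
          constructor
          · have : b ≤ x k := min_le_right _ _
            linarith
          · linarith [hxj.2, hb]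
        · rw [hqk k hki hkj]; exact mem_cube_iff.1 hx k
      -- sums are preserved
      have hsum_aux : ∀ y : Fin n → ℝ, ∑ k, y k = y j + (y i + ∑ k ∈ (univ \ {j}) \ {i}, y k) := by
        intro y
        rw [Finset.sum_eq_add_sum_sdiff_singleton_of_mem (mem_univ j),
          Finset.sum_eq_add_sum_sdiff_singleton_of_mem (Finset.mem_sdiff.2 ⟨mem_univ i, by simp [hji.symm]⟩)]
      have hsump : ∑ k, p k = ∑ k, x k := by
        rw [hsum_aux p, hsum_aux x, hpi, hpj]
        have : ∑ k ∈ (univ \ {j}) \ {i}, p k = ∑ k ∈ (univ \ {j}) \ {i}, x k := by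
          apply Finset.sum_congr rfl
          intro k hk
          simp only [Finset.mem_sdiff, Finset.mem_singleton] at hk
          exact hpk k hk.2 hk.1.2
        rw [this]; ring
      have hsumq : ∑ k, q k = ∑ k, x k := by
        rw [hsum_aux q, hsum_aux x, hqi, hqj]
        have : ∑ k ∈ (univ \ {j}) \ {i}, q k = ∑ k ∈ (univ \ {j}) \ {i}, x k := by
          apply Finset.sum_congr rfl
          intro k hk
          simp only [Finset.mem_sdiff, Finset.mem_singleton] at hk
          exact hqk k hk.2 hk.1.2
        rw [this]; ring
      -- fractional sets shrink
      have hsub : ∀ y : Fin n → ℝ, (∀ k, k ≠ i → k ≠ j → y k = x k) →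
          (univ.filter fun k => y k ≠ 0 ∧ y k ≠ 1) ⊆ (univ.filter fun k => x k ≠ 0 ∧ x k ≠ 1) ∪ {i, j} := by
        intro y hy k hk
        rw [Finset.mem_filter] at hk
        rcases eq_or_ne k i with rfl | hki
        · simp
        rcases eq_or_ne k j with rfl | hkj
        · simp
        · rw [Finset.mem_union, Finset.mem_filter]
          left
          exact ⟨mem_univ k, (hy k hki hkj) ▸ hk.2⟩
      have hcard_lt : ∀ y : Fin n → ℝ, (∀ k, k ≠ i → k ≠ j → y k = x k) →
          ((y i = 0 ∨ y i = 1) ∨ (y j = 0 ∨ y j = 1)) →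
          (univ.filter fun k => y k ≠ 0 ∧ y k ≠ 1).card ≤ m := by
        intro y hy hcase
        rcases hcase with hci | hcj
        · have hFsub : (univ.filter fun k => y k ≠ 0 ∧ y k ≠ 1) ⊆
              (univ.filter fun k => x k ≠ 0 ∧ x k ≠ 1).erase i := by
            intro k hk
            have hk' := Finset.mem_filter.1 hk
            rcases eq_or_ne k i with rfl | hki
            · rcases hci with h0 | h0 <;> simp [h0] at hk'
            rcases eq_or_ne k j with rfl | hkj
            · exact Finset.mem_erase.2 ⟨hji, Finset.mem_filter.2 ⟨mem_univ _, hjmem.2⟩⟩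
            · exact Finset.mem_erase.2 ⟨hki, Finset.mem_filter.2 ⟨mem_univ _, (hy k hki hkj) ▸ hk'.2⟩⟩
          have hcc := Finset.card_le_card hFsub
          have h2 := Finset.card_erase_of_mem (Finset.mem_filter.2 ⟨mem_univ i, hi.2⟩ :
            i ∈ univ.filter fun k => x k ≠ 0 ∧ x k ≠ 1)
          omega
        · have hFsub : (univ.filter fun k => y k ≠ 0 ∧ y k ≠ 1) ⊆
              (univ.filter fun k => x k ≠ 0 ∧ x k ≠ 1).erase j := by
            intro k hk
            have hk' := Finset.mem_filter.1 hk
            rcases eq_or_ne k j with rfl | hkj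
            · rcases hcj with h0 | h0 <;> simp [h0] at hk'
            rcases eq_or_ne k i with rfl | hki
            · exact Finset.mem_erase.2 ⟨hji.symm, Finset.mem_filter.2 ⟨mem_univ _, hi.2⟩⟩
            · exact Finset.mem_erase.2 ⟨hkj, Finset.mem_filter.2 ⟨mem_univ _, (hy k hki hkj) ▸ hk'.2⟩⟩
          have hcc := Finset.card_le_card hFsub
          have h2 := Finset.card_erase_of_mem (Finset.mem_filter.2 ⟨mem_univ j, hjmem.2⟩ :
            j ∈ univ.filter fun k => x k ≠ 0 ∧ x k ≠ 1)
          omega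
      have hpc : (univ.filter fun k => p k ≠ 0 ∧ p k ≠ 1).card ≤ m := by
        apply hcard_lt p hpk
        rcases min_choice (x i) (1 - x j) with he | he
        · left; left; rw [hpi, ← ha_def] at *; rw [ha_def, he]; ring
        · right; right; rw [hpj, ha_def, he]; ring
      have hqc : (univ.filter fun k => q k ≠ 0 ∧ q k ≠ 1).card ≤ m := by
        apply hcard_lt q hqk
        rcases min_choice (1 - x i) (x j) with he | he
        · left; right; rw [hqi, hb_def, he]; ring
        · right; left; rw [hqj, hb_def, he]; ring
      have hp0 : h p ≤ 0 := ih p hpmem hpc (by rw [hsump]; exact hs)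
      have hq0 : h q ≤ 0 := ih q hqmem hqc (by rw [hsumq]; exact hs)
      have hab : 0 < a + b := by linarith
      have hxcomb : x = (b/(a+b)) • p + (a/(a+b)) • q := by
        funext k
        simp only [Pi.add_apply, Pi.smul_apply, smul_eq_mul]
        rcases eq_or_ne k i with rfl | hki
        · rw [hpi, hqi]; field_simp; ring
        rcases eq_or_ne k j with rfl | hkj
        · rw [hpj, hqj]; field_simp; ring
        · rw [hpk k hki hkj, hqk k hki hkj]; field_simp; ring
      have c1 : 0 ≤ b/(a+b) := (div_pos hb hab).le
      have c2 : 0 ≤ a/(a+b) := (div_pos ha hab).le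
      have hcomb : h ((b/(a+b)) • p + (a/(a+b)) • q) ≤ (b/(a+b)) * h p + (a/(a+b)) * h q := by
        simpa [smul_eq_mul] using hcvx.2 hpmem hqmem c1 c2 (by field_simp; ring)
      rw [← hxcomb] at hcomb
      nlinarith [hcomb, hp0, hq0, c1, c2]
    · -- exactly one fractional coordinate
      push_neg at hj
      have hother : ∀ k, k ≠ i → x k = 0 ∨ x k = 1 := by
        intro k hk
        by_contra hkk
        push_neg at hkk
        exact hk (hj k (by simp [hkk.1, hkk.2]))
      set p : Fin n → ℝ := Function.update x i 0 with hp_def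
      set q : Fin n → ℝ := Function.update x i 1 with hq_def
      have hpmem : p ∈ Set.Icc (0:Fin n→ℝ) 1 := by
        rw [mem_cube_iff]; intro k
        rcases eq_or_ne k i with rfl | hki
        · simp [hp_def]
        · rw [hp_def, Function.update_of_ne hki]; exact mem_cube_iff.1 hx k
      have hqmem : q ∈ Set.Icc (0:Fin n→ℝ) 1 := by
        rw [mem_cube_iff]; intro k
        rcases eq_or_ne k i with rfl | hki
        · simp [hq_def]
        · rw [hq_def, Function.update_of_ne hki]; exact mem_cube_iff.1 hx k
      have hp0 : h p ≤ 0 := by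
        calc h p ≤ ∏ k, p k := hle p hpmem
        _ = 0 := Finset.prod_eq_zero (mem_univ i) (by rw [hp_def, Function.update_self])
      have hq0 : h q ≤ 0 := by
        have hzero : ∃ k, k ≠ i ∧ x k = 0 := by
          by_contra hno
          push_neg at hno
          have h1 : ∀ k, k ≠ i → x k = 1 := fun k hk => (hother k hk).resolve_left (hno k hk)
          have hsplit : ∑ k, x k = x i + ∑ k ∈ univ \ {i}, x k :=
            Finset.sum_eq_add_sum_sdiff_singleton_of_mem (mem_univ i) _
          have hrest : ∑ k ∈ univ \ {i}, x k = (n:ℝ) - 1 := by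
            rw [Finset.sum_congr rfl (fun k hk => h1 k (by simpa using (Finset.mem_sdiff.1 hk).2))]
            simp only [Finset.sum_const, smul_eq_mul, mul_one]
            rw [Finset.card_sdiff_of_subset (by simp), Finset.card_univ]
            simp [Fintype.card_fin]
            have : 1 ≤ n := by
              rcases Nat.eq_zero_or_pos n with h0 | h0
              · exact absurd (h0 ▸ i).2 (by omega)
              · exact h0
            push_cast [Nat.cast_sub this]
            ring
          rw [hsplit, hrest] at hs
          linarith [hxi.1]
        obtain ⟨k, hki, hk0⟩ := hzero
        calc h q ≤ ∏ l, q l := hle q hqmem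
        _ = 0 := Finset.prod_eq_zero (mem_univ k) (by rw [hq_def, Function.update_of_ne hki, hk0])
      have hxcomb : x = (1 - x i) • p + (x i) • q := by
        funext k
        simp only [Pi.add_apply, Pi.smul_apply, smul_eq_mul]
        rcases eq_or_ne k i with rfl | hki
        · simp [hp_def, hq_def]
        · rw [hp_def, hq_def, Function.update_of_ne hki, Function.update_of_ne hki]; ring
      have hcomb : h ((1 - x i) • p + (x i) • q) ≤ (1 - x i) * h p + (x i) * h q := by
        simpa [smul_eq_mul] using hcvx.2 hpmem hqmem
          (by linarith [hxi.2] : (0:ℝ) ≤ 1 - x i) hxi.1.le (by ring)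
      rw [← hxcomb] at hcomb
      nlinarith [hcomb, hp0, hq0, hxi.1, hxi.2]


lemma sum_diff_le {n : ℕ} (x : Fin n → ℝ) (hx : x ∈ Set.Icc (0:Fin n→ℝ) 1) (i : Fin n) :
    ∑ k ∈ univ \ {i}, x k ≤ (n:ℝ) - 1 := by
  have h1 : ∑ k ∈ univ \ {i}, x k ≤ ∑ k ∈ univ \ {i}, (1:ℝ) :=
    Finset.sum_le_sum (fun k _ => (mem_cube_iff.1 hx k).2)
  have h2 : ∑ k ∈ (univ \ {i} : Finset (Fin n)), (1:ℝ) = ((univ \ {i} : Finset (Fin n)).card : ℝ) := by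
    simp
  have h3 : ((univ \ {i} : Finset (Fin n)).card) = n - 1 := by
    rw [Finset.card_sdiff_of_subset (by simp)]
    simp
  have hn : 0 < n := i.pos
  rw [h2, h3] at h1
  calc ∑ k ∈ univ \ {i}, x k ≤ ((n - 1 : ℕ) : ℝ) := h1
  _ = (n:ℝ) - 1 := by push_cast [Nat.cast_sub hn]; ring

theorem envelope_prod_n (n : ℕ) (hn : 0 < n) :
    IsConvexEnvelopeOn (Set.Icc (0 : Fin n → ℝ) 1)
      (fun x => ∏ i, x i) (fun x => max (∑ i, x i - (n - 1)) 0) ∧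
    sSup ((fun x : Fin n → ℝ => (∏ i, x i) - max (∑ i, x i - (n - 1)) 0) ''
      Set.Icc (0 : Fin n → ℝ) 1) = ((n - 1) / n) ^ n := by
  have hhull := hull_eq n
  constructor
  · refine ⟨?_, ?_, ?_, ?_⟩
    · -- convexity
      rw [hhull]
      refine ⟨convex_Icc _ _, ?_⟩
      intro x hx y hy a b ha hb hab
      simp only [Pi.add_apply, Pi.smul_apply, smul_eq_mul]
      apply max_le
      · have he : ∑ i, (a * x i + b * y i) - ((n:ℝ) - 1)
            = a * (∑ i, x i - ((n:ℝ)-1)) + b * (∑ i, y i - ((n:ℝ)-1)) := by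
          rw [Finset.sum_add_distrib, ← Finset.mul_sum, ← Finset.mul_sum]
          have hb1 : b = 1 - a := by linarith
          rw [hb1]; ring
        rw [he]
        exact add_le_add (mul_le_mul_of_nonneg_left (le_max_left _ _) ha)
          (mul_le_mul_of_nonneg_left (le_max_left _ _) hb)
      · exact add_nonneg (mul_nonneg ha (le_max_right _ _)) (mul_nonneg hb (le_max_right _ _))
    · exact (((continuous_finset_sum univ (fun i _ => continuous_apply i)).sub
        continuous_const).max continuous_const).lowerSemicontinuous.lowerSemicontinuousOn _
    · -- g ≤ f on S
      intro x hx
      apply max_le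
      · have := sum_sub_le_prod univ x (mem_cube_iff.1 hx)
        simpa using this
      · exact Finset.prod_nonneg (fun i _ => (mem_cube_iff.1 hx i).1)
    · -- maximality
      intro h hconv _hlsc hle x hx
      rw [hhull] at hconv hx
      have key := key_le_zero h hconv hle
      show h x ≤ max (∑ i, x i - ((n:ℝ) - 1)) 0
      rcases le_or_gt (∑ i, x i) ((n:ℝ)-1) with hc | hc
      · rw [max_eq_right (by linarith)]
        exact key x hx hc
      rcases lt_or_ge (∑ i, x i) n with hc2 | hc2
      · set s : ℝ := ∑ i, x i - ((n:ℝ)-1) with hs_def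
        have hs0 : 0 < s := by rw [hs_def]; linarith
        have hs1 : s < 1 := by rw [hs_def]; linarith
        have h1s : 0 < 1 - s := by linarith
        set y : Fin n → ℝ := fun i => (x i - s)/(1-s) with hy_def
        have hxis : ∀ i, s ≤ x i := by
          intro i
          have hsplit : ∑ k, x k = x i + ∑ k ∈ univ \ {i}, x k :=
            Finset.sum_eq_add_sum_sdiff_singleton_of_mem (mem_univ i) _
          have hbd := sum_diff_le x hx i
          rw [hs_def]
          linarith
        have hymem : y ∈ Set.Icc (0:Fin n→ℝ) 1 := mem_cube_iff.2 (fun i =>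
          ⟨div_nonneg (by linarith [hxis i]) h1s.le,
           by rw [hy_def]; simp only; rw [div_le_one h1s]; linarith [(mem_cube_iff.1 hx i).2]⟩)
        have hysum : ∑ i, y i = (n:ℝ) - 1 := by
          rw [hy_def]
          simp only
          rw [← Finset.sum_div, Finset.sum_sub_distrib, Finset.sum_const, Finset.card_univ,
            Fintype.card_fin]
          rw [div_eq_iff h1s.ne']
          rw [hs_def]
          push_cast
          ring
        have hone : (1:Fin n → ℝ) ∈ Set.Icc (0:Fin n→ℝ) 1 :=
          mem_cube_iff.2 (fun i => by norm_num)
        have hxcomb : x = s • (1:Fin n → ℝ) + (1-s) • y := by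
          funext i
          simp only [Pi.add_apply, Pi.smul_apply, Pi.one_apply, smul_eq_mul, hy_def]
          field_simp
          ring
        have hcomb : h (s • (1:Fin n → ℝ) + (1-s) • y) ≤ s * h 1 + (1-s) * h y := by
          simpa [smul_eq_mul] using hconv.2 hone hymem hs0.le h1s.le (by ring)
        rw [← hxcomb] at hcomb
        have hh1 : h 1 ≤ 1 := by simpa using hle 1 hone
        have hhy : h y ≤ 0 := key y hymem (le_of_eq hysum)
        rw [max_eq_left hs0.le]
        nlinarith
      · -- x = 1
        have hx1 : x = 1 := by
          funext i
          have hsplit : ∑ k, x k = x i + ∑ k ∈ univ \ {i}, x k :=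
            Finset.sum_eq_add_sum_sdiff_singleton_of_mem (mem_univ i) _
          have hbd := sum_diff_le x hx i
          have : (1:ℝ) ≤ x i := by linarith
          exact le_antisymm (mem_cube_iff.1 hx i).2 this
        rw [hx1]
        have hs1 : ∑ i, (1:Fin n → ℝ) i = (n:ℝ) := by simp
        rw [hs1]
        have hmax : max ((n:ℝ) - ((n:ℝ)-1)) 0 = 1 := by
          rw [max_eq_left (by linarith)]; ring
        rw [hmax]
        have hone : (1:Fin n → ℝ) ∈ Set.Icc (0:Fin n→ℝ) 1 :=
          mem_cube_iff.2 (fun i => by norm_num)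
        simpa using hle 1 hone
  · -- the sup
    have hnR : (0:ℝ) < n := by exact_mod_cast hn
    set c : ℝ := ((n:ℝ) - 1) / n with hc_def
    have h1n : (1:ℝ) ≤ n := by exact_mod_cast hn
    have hc0 : 0 ≤ c := div_nonneg (by linarith) hnR.le
    have hc1 : c ≤ 1 := by rw [hc_def, div_le_one hnR]; linarith
    have hAMGM : ∀ x : Fin n → ℝ, x ∈ Set.Icc (0:Fin n→ℝ) 1 →
        ∏ i, x i ≤ ((∑ i, x i)/n)^n := by
      intro x hx
      have hw : ∀ i ∈ (univ : Finset (Fin n)), (0:ℝ) ≤ 1/(n:ℝ) := fun i _ => by positivity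
      have hw' : ∑ _i : Fin n, (1:ℝ)/(n:ℝ) = 1 := by
        rw [Finset.sum_const, Finset.card_univ, Fintype.card_fin, nsmul_eq_mul]
        field_simp
      have hz : ∀ i ∈ univ, 0 ≤ x i := fun i _ => (mem_cube_iff.1 hx i).1
      have hgm := Real.geom_mean_le_arith_mean_weighted univ (fun _ => 1/(n:ℝ)) x hw hw' hz
      have hprod : ∏ i, x i = (∏ i, x i ^ ((1:ℝ)/n)) ^ n := by
        rw [← Finset.prod_pow]
        apply Finset.prod_congr rfl
        intro i _
        rw [← Real.rpow_natCast (x i ^ ((1:ℝ)/n)) n, ← Real.rpow_mul (hz i (mem_univ i))]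
        rw [one_div, inv_mul_cancel₀ hnR.ne', Real.rpow_one]
      have hsum : ∑ i, (1:ℝ)/n * x i = (∑ i, x i)/n := by
        rw [← Finset.mul_sum]; ring
      rw [hprod]
      apply pow_le_pow_left₀ (Finset.prod_nonneg fun i _ => Real.rpow_nonneg (hz i (mem_univ i)) _)
      rw [← hsum]; exact hgm
    have hub : ∀ x ∈ Set.Icc (0:Fin n→ℝ) 1,
        (∏ i, x i) - max (∑ i, x i - ((n:ℝ)-1)) 0 ≤ c^n := by
      intro x hx
      have hsnn : 0 ≤ ∑ i, x i := Finset.sum_nonneg fun i _ => (mem_cube_iff.1 hx i).1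
      have hsle : ∑ i, x i ≤ n := by
        calc ∑ i, x i ≤ ∑ _i : Fin n, (1:ℝ) :=
          Finset.sum_le_sum fun i _ => (mem_cube_iff.1 hx i).2
        _ = n := by simp
      have hP := hAMGM x hx
      set t : ℝ := (∑ i, x i)/n with ht_def
      have ht1 : t ≤ 1 := by rw [ht_def, div_le_one hnR]; exact hsle
      have ht0 : 0 ≤ t := div_nonneg hsnn hnR.le
      rcases le_or_gt (∑ i, x i) ((n:ℝ)-1) with hcase | hcase
      · rw [max_eq_right (by linarith)]
        have htc : t ≤ c := by rw [ht_def, hc_def]; gcongr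
        have := pow_le_pow_left₀ ht0 htc n
        linarith
      · rw [max_eq_left (by linarith)]
        have htc : c ≤ t := by rw [ht_def, hc_def]; gcongr
        have hgs := geom_sum₂_mul t c n
        have hterm : ∀ i ∈ Finset.range n, t^i * c^(n-1-i) ≤ 1 := by
          intro i _
          exact mul_le_one₀ (pow_le_one₀ ht0 ht1) (pow_nonneg hc0 _) (pow_le_one₀ hc0 hc1)
        have hS : ∑ i ∈ Finset.range n, t^i * c^(n-1-i) ≤ n := by
          calc ∑ i ∈ Finset.range n, t^i * c^(n-1-i) ≤ ∑ _i ∈ Finset.range n, (1:ℝ) :=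
            Finset.sum_le_sum hterm
          _ = n := by simp
        have hS0 : t^n - c^n ≤ n * (t - c) := by
          rw [← hgs]
          exact mul_le_mul_of_nonneg_right hS (sub_nonneg.2 htc)
        have hnt : (n:ℝ) * t = ∑ i, x i := by rw [ht_def]; field_simp
        have hnc : (n:ℝ) * c = (n:ℝ) - 1 := by rw [hc_def]; field_simp
        nlinarith [hP, hS0]
    set x0 : Fin n → ℝ := fun _ => c with hx0_def
    have hx0mem : x0 ∈ Set.Icc (0:Fin n→ℝ) 1 := mem_cube_iff.2 fun i => ⟨hc0, hc1⟩
    have hx0sum : ∑ i, x0 i = (n:ℝ) - 1 := by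
      rw [hx0_def, Finset.sum_const, Finset.card_univ, Fintype.card_fin, nsmul_eq_mul, hc_def]
      field_simp
    have hx0val : (∏ i, x0 i) - max (∑ i, x0 i - ((n:ℝ)-1)) 0 = c^n := by
      rw [hx0sum, hx0_def]
      simp [Finset.prod_const, Finset.card_univ]
    apply le_antisymm
    · apply csSup_le
      · exact ⟨_, Set.mem_image_of_mem _ hx0mem⟩
      · rintro y ⟨x, hxmem, rfl⟩
        exact hub x hxmem
    · apply le_csSup
      · exact ⟨c^n, by rintro y ⟨x, hxmem, rfl⟩; exact hub x hxmem⟩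
      · exact ⟨x0, hx0mem, hx0val⟩
end
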